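/- arXiv:0904.1479 — 5 statements merged into one kernel-verified Lean document; each statement's English description precedes it below -/
import Mathlib

section
/- For every integer n ≥ 2, exc(n, V_2) = ⌈2^{n+1}/3⌉, where V_2 = {0,1}^2 is the full vertex set of the 2-dimensional cube. That is, the maximum size of a subset S ⊆ {0,1}^n containing no embedded copy of the full 2-dimensional subcube is exactly ⌈2^{n+1}/3⌉. -/
open Finset Filter Topology

/-- The weight of a vertex of the hypercube `{0,1}^n`: number of coordinates equal to 1. -/
def cubeWeight {n : ℕ} (x : Fin n → Bool) : ℕ :=
  (Finset.univ.filter fun i => x i = true).card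

/-- The support of a vertex of the hypercube: the set of coordinates equal to 1. -/
def cubeSupp {n : ℕ} (x : Fin n → Bool) : Finset (Fin n) :=
  Finset.univ.filter fun i => x i = true

/-- An embedding of the `d`-dimensional hypercube `Q_d` into `Q_n`: an injective map on
vertices that preserves the edges (pairs at Hamming distance 1). -/
def IsCubeEmbedding {d n : ℕ} (i : (Fin d → Bool) → (Fin n → Bool)) : Prop :=
  Function.Injective i ∧
    ∀ x y : Fin d → Bool, hammingDist x y = 1 → hammingDist (i x) (i y) = 1

/-- `S ⊆ V_n` is `F`-free (for `F ⊆ V_d`) if no embedding `i : Q_d → Q_n` has `i(F) ⊆ S`. -/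
def IsFree {d n : ℕ} (F : Set (Fin d → Bool)) (S : Set (Fin n → Bool)) : Prop :=
  ∀ i : (Fin d → Bool) → (Fin n → Bool), IsCubeEmbedding i → ¬ (i '' F ⊆ S)

/-- `exc n F`: the maximum size of an `F`-free subset of `V_n = {0,1}^n`. -/
noncomputable def exc {d : ℕ} (n : ℕ) (F : Set (Fin d → Bool)) : ℕ :=
  sSup {k : ℕ | ∃ S : Finset (Fin n → Bool), IsFree F (S : Set (Fin n → Bool)) ∧ S.card = k}

namespace Kost

/-- Set two coordinates of a point of the cube. -/
def st {n : ℕ} (x : Fin n → Bool) (i j : Fin n) (a b : Bool) : Fin n → Bool :=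
  Function.update (Function.update x i a) j b

/-- `S` contains a (combinatorial) square: two free coordinates `i ≠ j`. -/
def HasSq {n : ℕ} (S : Finset (Fin n → Bool)) : Prop :=
  ∃ x : Fin n → Bool, ∃ i j : Fin n, i ≠ j ∧ ∀ a b : Bool, st x i j a b ∈ S

variable {n : ℕ}

lemma st_apply_i {x : Fin n → Bool} {i j : Fin n} (hij : i ≠ j) (a b : Bool) :
    st x i j a b i = a := by
  simp [st, Function.update_apply, hij]

lemma st_apply_j {x : Fin n → Bool} {i j : Fin n} (a b : Bool) :
    st x i j a b j = b := by
  simp [st]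

lemma st_apply_other {x : Fin n → Bool} {i j k : Fin n} (hk : k ≠ i) (hk' : k ≠ j)
    (a b : Bool) : st x i j a b k = x k := by
  simp [st, Function.update_apply, hk, hk']

/-- Characterisation of Hamming distance 1 for boolean vectors. -/
lemma ham_one {x y : Fin n → Bool} :
    hammingDist x y = 1 ↔ ∃ i, y = Function.update x i (!(x i)) := by
  constructor
  · intro h
    rw [hammingDist, Finset.card_eq_one] at h
    obtain ⟨i, hi⟩ := h
    refine ⟨i, funext fun k => ?_⟩
    rcases eq_or_ne k i with rfl | hk
    · have hmem : k ∈ Finset.univ.filter fun t => x t ≠ y t := by rw [hi]; simp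
      have hne : x k ≠ y k := by simpa using hmem
      rw [Function.update_self]
      cases hxk : x k <;> cases hyk : y k <;> simp_all
    · have hmem : k ∉ Finset.univ.filter fun t => x t ≠ y t := by rw [hi]; simp [hk]
      have hxy : ¬ x k ≠ y k := by simpa using hmem
      rw [Function.update_of_ne hk]
      exact (not_not.mp hxy).symm
  · rintro ⟨i, rfl⟩
    rw [hammingDist]
    have hf : (Finset.univ.filter fun t => x t ≠ Function.update x i (!(x i)) t) = {i} := by
      ext k
      rcases eq_or_ne k i with rfl | hk
      · simp
      · simp [Function.update_of_ne hk, hk]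
    rw [hf, Finset.card_singleton]

lemma bool_cases (a b : Bool) : a = b ∨ a = !b := by cases a <;> cases b <;> simp

/-- A square gives rise to a cube embedding whose image is the square. -/
lemma hasSq_of_not_isFree {S : Finset (Fin n → Bool)}
    (h : ¬ IsFree (Set.univ : Set (Fin 2 → Bool)) (S : Set (Fin n → Bool))) : HasSq S := by
  rw [IsFree] at h
  push_neg at h
  obtain ⟨e, hemb, hsub⟩ := h
  have hmem : ∀ v : Fin 2 → Bool, e v ∈ S := fun v => hsub ⟨v, Set.mem_univ v, rfl⟩
  set x := e ![false, false] with hx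
  have h10 : hammingDist (e ![false, false]) (e ![true, false]) = 1 :=
    hemb.2 _ _ (by decide)
  have h01 : hammingDist (e ![false, false]) (e ![false, true]) = 1 :=
    hemb.2 _ _ (by decide)
  obtain ⟨i, hi⟩ := ham_one.mp h10
  obtain ⟨j, hj⟩ := ham_one.mp h01
  rw [← hx] at hi hj
  have hij : i ≠ j := by
    rintro rfl
    have he : e ![true, false] = e ![false, true] := by rw [hi, hj]
    have := hemb.1 he
    simpa using congrFun this 0
  have h11a : hammingDist (e ![true, false]) (e ![true, true]) = 1 := hemb.2 _ _ (by decide)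
  obtain ⟨k, hk⟩ := ham_one.mp h11a
  rw [hi] at hk
  have h11b : hammingDist (e ![false, true]) (e ![true, true]) = 1 := hemb.2 _ _ (by decide)
  obtain ⟨l, hl⟩ := ham_one.mp h11b
  rw [hj] at hl
  have hki : k ≠ i := by
    rintro rfl
    have : e ![true, true] = x := by
      rw [hk, Function.update_self]
      simp [Function.update_idem]
    have heq := hemb.1 (this.trans hx)
    simpa using congrFun heq 0
  have hx1k : (Function.update x i (!(x i))) k = x k := Function.update_of_ne hki _ _
  have hkj : k = j := by
    by_contra hkj
    -- e![true,true] differs from x exactly at i and k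
    have hyk : e ![true, true] k = !(x k) := by rw [hk, Function.update_self, hx1k]
    have hlk : l = k := by
      by_contra hlk
      have h1 : e ![true, true] k = (Function.update x j (!(x j))) k := by
        rw [hl, Function.update_of_ne (Ne.symm hlk)]
      rw [Function.update_of_ne hkj] at h1
      rw [hyk] at h1
      simp at h1
    subst hlk
    have hyj1 : e ![true, true] j = x j := by
      rw [hk, Function.update_of_ne (Ne.symm hkj), Function.update_of_ne (Ne.symm hij)]
    have hyj2 : e ![true, true] j = !(x j) := by
      rw [hl, Function.update_of_ne (Ne.symm hkj), Function.update_self]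
    rw [hyj1] at hyj2
    simp at hyj2
  rw [hkj] at hk
  -- now e![true,true] = st x i j (!x i) (!x j)
  have hx1j : (Function.update x i (!(x i))) j = x j := Function.update_of_ne (Ne.symm hij) _ _
  rw [hx1j] at hk
  have h11 : e ![true, true] = st x i j (!(x i)) (!(x j)) := hk
  refine ⟨x, i, j, hij, fun a b => ?_⟩
  have e00 : st x i j (x i) (x j) = x := by
    rw [st]
    have : (Function.update x i (x i)) = x := Function.update_eq_self i x
    rw [this]
    have : x j = x j := rfl
    exact Function.update_eq_self j x
  have e10 : st x i j (!(x i)) (x j) = Function.update x i (!(x i)) := by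
    rw [st]
    have hji : (Function.update x i (!(x i))) j = x j := Function.update_of_ne (Ne.symm hij) _ _
    rw [← hji]
    exact Function.update_eq_self j _
  have e01 : st x i j (x i) (!(x j)) = Function.update x j (!(x j)) := by
    rw [st]
    have : (Function.update x i (x i)) = x := Function.update_eq_self i x
    rw [this]
  rcases bool_cases a (x i) with rfl | rfl <;> rcases bool_cases b (x j) with rfl | rfl
  · rw [e00]; exact hx ▸ hmem _
  · rw [e01, ← hj]; exact hmem _
  · rw [e10, ← hi]; exact hmem _
  · rw [← h11]; exact hmem _

lemma not_isFree_of_hasSq {S : Finset (Fin n → Bool)} (h : HasSq S) :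
    ¬ IsFree (Set.univ : Set (Fin 2 → Bool)) (S : Set (Fin n → Bool)) := by
  obtain ⟨x, i, j, hij, hall⟩ := h
  intro hfree
  set e : (Fin 2 → Bool) → (Fin n → Bool) := fun v => st x i j (v 0) (v 1) with he
  have ev : ∀ (w : Fin 2 → Bool) (t : Fin n), e w t = st x i j (w 0) (w 1) t := fun _ _ => rfl
  have hd : ∀ u v : Fin 2 → Bool, hammingDist u v = 1 →
      (u 0 ≠ v 0 ∧ u 1 = v 1) ∨ (u 0 = v 0 ∧ u 1 ≠ v 1) := by decide
  have hemb : IsCubeEmbedding e := by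
    constructor
    · intro u v huv
      have h0 : u 0 = v 0 := by
        have h' := congrFun huv i
        rw [ev, ev, st_apply_i hij, st_apply_i hij] at h'
        exact h'
      have h1 : u 1 = v 1 := by
        have h' := congrFun huv j
        rw [ev, ev, st_apply_j, st_apply_j] at h'
        exact h'
      funext t
      fin_cases t
      · exact h0
      · exact h1
    · intro u v huv
      rw [hammingDist]
      rcases hd u v huv with ⟨h0, h1⟩ | ⟨h0, h1⟩
      · have hf : (Finset.univ.filter fun t => e u t ≠ e v t) = {i} := by
          ext t
          simp only [Finset.mem_filter, Finset.mem_univ, true_and, Finset.mem_singleton]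
          constructor
          · intro hne
            by_contra hti
            rcases eq_or_ne t j with rfl | htj
            · exact hne (by rw [ev, ev, st_apply_j, st_apply_j, h1])
            · exact hne (by rw [ev, ev, st_apply_other hti htj, st_apply_other hti htj])
          · rintro rfl
            rw [ev, ev, st_apply_i hij, st_apply_i hij]
            exact h0
        rw [hf, Finset.card_singleton]
      · have hf : (Finset.univ.filter fun t => e u t ≠ e v t) = {j} := by
          ext t
          simp only [Finset.mem_filter, Finset.mem_univ, true_and, Finset.mem_singleton]
          constructor
          · intro hne
            by_contra htj
            rcases eq_or_ne t i with rfl | hti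
            · exact hne (by rw [ev, ev, st_apply_i hij, st_apply_i hij, h0])
            · exact hne (by rw [ev, ev, st_apply_other hti htj, st_apply_other hti htj])
          · rintro rfl
            rw [ev, ev, st_apply_j, st_apply_j]
            exact h1
        rw [hf, Finset.card_singleton]
  refine hfree e hemb ?_
  rintro _ ⟨v, -, rfl⟩
  exact Finset.mem_coe.mpr (hall (v 0) (v 1))


section Split

variable {m : ℕ}

/-- Glue a point of `Q_m` with two extra coordinates. -/
def p (v : Fin m → Bool) (a b : Bool) : Fin (m + 2) → Bool :=
  Fin.append v ![a, b]

def i₀ (m : ℕ) : Fin (m + 2) := Fin.natAdd m 0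
def i₁ (m : ℕ) : Fin (m + 2) := Fin.natAdd m 1

lemma p_castAdd (v : Fin m → Bool) (a b : Bool) (k : Fin m) :
    p v a b (Fin.castAdd 2 k) = v k := Fin.append_left _ _ k

lemma p_i0 (v : Fin m → Bool) (a b : Bool) : p v a b (i₀ m) = a := by
  show Fin.append v ![a, b] (Fin.natAdd m 0) = a
  rw [Fin.append_right]
  rfl

lemma p_i1 (v : Fin m → Bool) (a b : Bool) : p v a b (i₁ m) = b := by
  show Fin.append v ![a, b] (Fin.natAdd m 1) = b
  rw [Fin.append_right]
  rfl

lemma val_ca (k : Fin m) : (Fin.castAdd 2 k).val = k.val := rfl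
lemma val_i0 : (i₀ m).val = m := rfl
lemma val_i1 : (i₁ m).val = m + 1 := rfl

lemma ca_ne_i0 (k : Fin m) : Fin.castAdd 2 k ≠ i₀ m := by
  have hk := k.isLt
  intro h
  have := congrArg Fin.val h
  rw [val_ca, val_i0] at this
  omega

lemma ca_ne_i1 (k : Fin m) : Fin.castAdd 2 k ≠ i₁ m := by
  have hk := k.isLt
  intro h
  have := congrArg Fin.val h
  rw [val_ca, val_i1] at this
  omega

lemma i0_ne_i1 : i₀ m ≠ i₁ m := by
  intro h
  have := congrArg Fin.val h
  rw [val_i0, val_i1] at this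
  omega

lemma ca_inj {k k' : Fin m} (h : Fin.castAdd 2 k = Fin.castAdd 2 k') : k = k' := by
  have := congrArg Fin.val h
  rw [val_ca, val_ca] at this
  exact Fin.ext this

/-- Restriction of a point of `Q_{m+2}` to the first `m` coordinates. -/
def res {m : ℕ} (x : Fin (m + 2) → Bool) : Fin m → Bool := fun k => x (Fin.castAdd 2 k)

lemma recon (x : Fin (m + 2) → Bool) :
    p (res x) (x (i₀ m)) (x (i₁ m)) = x := by
  funext t
  refine Fin.addCases (fun k => ?_) (fun k => ?_) t
  · exact p_castAdd _ _ _ k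
  · show Fin.append _ ![x (i₀ m), x (i₁ m)] (Fin.natAdd m k) = x (Fin.natAdd m k)
    rw [Fin.append_right]
    fin_cases k
    · rfl
    · rfl

lemma stp0 (v : Fin m → Bool) (a' b' a b : Bool) :
    st (p v a' b') (i₀ m) (i₁ m) a b = p v a b := by
  funext t
  refine Fin.addCases (fun k => ?_) (fun k => ?_) t
  · rw [st_apply_other (ca_ne_i0 k) (ca_ne_i1 k), p_castAdd, p_castAdd]
  · fin_cases k
    · show st (p v a' b') (i₀ m) (i₁ m) a b (i₀ m) = p v a b (i₀ m)
      rw [st_apply_i i0_ne_i1, p_i0]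
    · show st (p v a' b') (i₀ m) (i₁ m) a b (i₁ m) = p v a b (i₁ m)
      rw [st_apply_j, p_i1]

lemma stp1 (w : Fin m → Bool) (k : Fin m) (a b α β : Bool) :
    st (p w a b) (Fin.castAdd 2 k) (i₀ m) α β = p (Function.update w k α) β b := by
  funext t
  refine Fin.addCases (fun k' => ?_) (fun k' => ?_) t
  · rcases eq_or_ne k' k with rfl | hkk
    · rw [st_apply_i (ca_ne_i0 k'), p_castAdd, Function.update_self]
    · rw [st_apply_other (fun h => hkk (ca_inj h)) (ca_ne_i0 k'), p_castAdd, p_castAdd,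
        Function.update_of_ne hkk]
  · fin_cases k'
    · show st (p w a b) (Fin.castAdd 2 k) (i₀ m) α β (i₀ m) = p _ β b (i₀ m)
      rw [st_apply_j, p_i0]
    · show st (p w a b) (Fin.castAdd 2 k) (i₀ m) α β (i₁ m) = p _ β b (i₁ m)
      rw [st_apply_other (Ne.symm (ca_ne_i1 k)) (Ne.symm i0_ne_i1), p_i1, p_i1]

lemma stp2 (w : Fin m → Bool) (k : Fin m) (a b α β : Bool) :
    st (p w a b) (Fin.castAdd 2 k) (i₁ m) α β = p (Function.update w k α) a β := by
  funext t
  refine Fin.addCases (fun k' => ?_) (fun k' => ?_) t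
  · rcases eq_or_ne k' k with rfl | hkk
    · rw [st_apply_i (ca_ne_i1 k'), p_castAdd, Function.update_self]
    · rw [st_apply_other (fun h => hkk (ca_inj h)) (ca_ne_i1 k'), p_castAdd, p_castAdd,
        Function.update_of_ne hkk]
  · fin_cases k'
    · show st (p w a b) (Fin.castAdd 2 k) (i₁ m) α β (i₀ m) = p _ a β (i₀ m)
      rw [st_apply_other (Ne.symm (ca_ne_i0 k)) i0_ne_i1, p_i0, p_i0]
    · show st (p w a b) (Fin.castAdd 2 k) (i₁ m) α β (i₁ m) = p _ a β (i₁ m)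
      rw [st_apply_j, p_i1]

lemma stp3 (w : Fin m → Bool) {i j : Fin m} (hij : i ≠ j) (a b α β : Bool) :
    st (p w a b) (Fin.castAdd 2 i) (Fin.castAdd 2 j) α β = p (st w i j α β) a b := by
  have hcij : Fin.castAdd 2 i ≠ Fin.castAdd 2 j := fun h => hij (ca_inj h)
  funext t
  refine Fin.addCases (fun k' => ?_) (fun k' => ?_) t
  · rcases eq_or_ne k' i with rfl | hki
    · rw [st_apply_i hcij, p_castAdd, st_apply_i hij]
    · rcases eq_or_ne k' j with rfl | hkj
      · rw [st_apply_j, p_castAdd, st_apply_j]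
      · rw [st_apply_other (fun h => hki (ca_inj h)) (fun h => hkj (ca_inj h)), p_castAdd,
          p_castAdd, st_apply_other hki hkj]
  · fin_cases k'
    · show st (p w a b) _ _ α β (i₀ m) = p _ a b (i₀ m)
      rw [st_apply_other (Ne.symm (ca_ne_i0 i)) (Ne.symm (ca_ne_i0 j)), p_i0, p_i0]
    · show st (p w a b) _ _ α β (i₁ m) = p _ a b (i₁ m)
      rw [st_apply_other (Ne.symm (ca_ne_i1 i)) (Ne.symm (ca_ne_i1 j)), p_i1, p_i1]

lemma st_update_i {x : Fin m → Bool} {i j : Fin m} (hij : i ≠ j) (a b a' : Bool) :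
    Function.update (st x i j a b) i a' = st x i j a' b := by
  funext t
  rcases eq_or_ne t i with rfl | hti
  · rw [Function.update_self, st_apply_i hij]
  · rw [Function.update_of_ne hti]
    rcases eq_or_ne t j with rfl | htj
    · rw [st_apply_j, st_apply_j]
    · rw [st_apply_other hti htj, st_apply_other hti htj]

lemma st_update_j {x : Fin m → Bool} {i j : Fin m} (hij : i ≠ j) (a b b' : Bool) :
    Function.update (st x i j a b) j b' = st x i j a b' := by
  funext t
  rcases eq_or_ne t j with rfl | htj
  · rw [Function.update_self, st_apply_j]
  · rw [Function.update_of_ne htj]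
    rcases eq_or_ne t i with rfl | hti
    · rw [st_apply_i hij, st_apply_i hij]
    · rw [st_apply_other hti htj, st_apply_other hti htj]

end Split

/-- Number of points of `S` in the 4-point fiber over `v`. -/
def fdeg {m : ℕ} (S : Finset (Fin (m + 2) → Bool)) (v : Fin m → Bool) : ℕ :=
  ((univ : Finset (Bool × Bool)).filter fun ab => p v ab.1 ab.2 ∈ S).card

lemma card_univ_bool (m : ℕ) : (univ : Finset (Fin m → Bool)).card = 2 ^ m := by
  rw [Finset.card_univ, Fintype.card_fun]
  simp

/-- The key upper bound, by induction on `n` in steps of two. -/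
lemma upper : ∀ n : ℕ, ∀ S : Finset (Fin n → Bool), ¬ HasSq S →
    3 * S.card ≤ 2 ^ (n + 1) + 2 := by
  intro n
  induction n using Nat.strong_induction_on with
  | _ n ih =>
    match n, ih with
    | 0, _ =>
      intro S _
      have h1 : S.card ≤ 1 := by
        have h := Finset.card_le_univ S
        simp [Fintype.card_fun] at h
        exact h
      norm_num
      omega
    | 1, _ =>
      intro S _
      have h1 : S.card ≤ 2 := by
        have h := Finset.card_le_univ S
        simp [Fintype.card_fun] at h
        exact h
      norm_num
      omega
    | (m + 2), ih =>
      intro S hS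
      classical
      have hfib : S.card
          = ∑ v ∈ (univ : Finset (Fin m → Bool)),
              (S.filter fun x => res x = v).card :=
        Finset.card_eq_sum_card_fiberwise (fun x _ => Finset.mem_univ _)
      have hfibdeg : ∀ v : Fin m → Bool,
          (S.filter fun x => res x = v).card = fdeg S v := by
        intro v
        rw [fdeg]
        apply Finset.card_bij (fun x _ => ((x (i₀ m), x (i₁ m)) : Bool × Bool))
        · intro x hx
          rw [Finset.mem_filter] at hx
          rw [Finset.mem_filter]
          refine ⟨Finset.mem_univ _, ?_⟩
          show p v (x (i₀ m)) (x (i₁ m)) ∈ S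
          have hre : p v (x (i₀ m)) (x (i₁ m)) = x := by
            conv_lhs => rw [← hx.2]
            exact recon x
          rw [hre]
          exact hx.1
        · intro x hx x' hx' heq
          rw [Finset.mem_filter] at hx hx'
          have h0 : x (i₀ m) = x' (i₀ m) := congrArg Prod.fst heq
          have h1 : x (i₁ m) = x' (i₁ m) := congrArg Prod.snd heq
          rw [← recon x, ← recon x', hx.2, hx'.2, h0, h1]
        · intro ab hab
          rw [Finset.mem_filter] at hab
          refine ⟨p v ab.1 ab.2, ?_, ?_⟩
          · rw [Finset.mem_filter]
            refine ⟨hab.2, ?_⟩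
            funext k
            show p v ab.1 ab.2 (Fin.castAdd 2 k) = v k
            exact p_castAdd v ab.1 ab.2 k
          · rw [p_i0, p_i1]
      have hdeg_le : ∀ v, fdeg S v ≤ 3 := by
        intro v
        by_contra hlt
        push_neg at hlt
        have hall : ∀ a b : Bool, p v a b ∈ S := by
          have huniv : ((univ : Finset (Bool × Bool)).filter fun ab => p v ab.1 ab.2 ∈ S)
              = univ := by
            apply Finset.eq_univ_of_card
            have hle := Finset.card_filter_le (univ : Finset (Bool × Bool))
              (fun ab => p v ab.1 ab.2 ∈ S)
            have h4 : Fintype.card (Bool × Bool) = 4 := rfl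
            have h4a : (univ : Finset (Bool × Bool)).card = 4 := rfl
            simp only [fdeg] at hlt
            omega
          intro a b
          have hm : ((a, b) : Bool × Bool) ∈ (univ : Finset (Bool × Bool)) := Finset.mem_univ _
          rw [← huniv] at hm
          exact (Finset.mem_filter.mp hm).2
        exact hS ⟨p v false false, i₀ m, i₁ m, i0_ne_i1,
          fun a b => by rw [stp0]; exact hall a b⟩
      set U : Finset (Fin m → Bool) := univ.filter fun v => fdeg S v = 3 with hU
      set W : Finset (Fin m → Bool) := univ.filter fun v => ¬ fdeg S v = 3 with hW
      have hsplit : ∑ v ∈ U, fdeg S v + ∑ v ∈ W, fdeg S v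
          = ∑ v ∈ (univ : Finset (Fin m → Bool)), fdeg S v :=
        Finset.sum_filter_add_sum_filter_not _ _ _
      have h3 : ∑ v ∈ U, fdeg S v = 3 * U.card := by
        rw [Finset.sum_congr rfl (fun v hv => (Finset.mem_filter.mp hv).2),
          Finset.sum_const, smul_eq_mul, mul_comm]
      have h2 : ∑ v ∈ W, fdeg S v ≤ 2 * W.card := by
        have := Finset.sum_le_card_nsmul W (fdeg S) 2
          (fun v hv => by
            have h1 := hdeg_le v
            have h2 := (Finset.mem_filter.mp hv).2
            omega)
        rwa [smul_eq_mul, mul_comm] at this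
      have hcards : U.card + W.card = 2 ^ m := by
        rw [hU, hW, Finset.card_filter_add_card_filter_not, card_univ_bool]
      -- the set of saturated fibers contains no square
      have hUsq : ¬ HasSq U := by
        rintro ⟨x, i, j, hij, hall⟩
        have hmem3 : ∀ a b : Bool, fdeg S (st x i j a b) = 3 :=
          fun a b => (Finset.mem_filter.mp (hall a b)).2
        have hmiss : ∀ v : Fin m → Bool, fdeg S v = 3 →
            ∃ mv : Bool × Bool, ∀ ab : Bool × Bool, (p v ab.1 ab.2 ∉ S ↔ ab = mv) := by
          intro v hv
          have hcard : ((univ : Finset (Bool × Bool)).filter fun ab => p v ab.1 ab.2 ∉ S).card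
              = 1 := by
            have h4 := Finset.card_filter_add_card_filter_not
              (s := (univ : Finset (Bool × Bool))) (fun ab => p v ab.1 ab.2 ∈ S)
            have h5 : (univ : Finset (Bool × Bool)).card = 4 := rfl
            simp only [fdeg] at hv
            omega
          obtain ⟨mv, hmv⟩ := Finset.card_eq_one.mp hcard
          refine ⟨mv, fun ab => ?_⟩
          constructor
          · intro hab
            have hm : ab ∈ ((univ : Finset (Bool × Bool)).filter fun ab => p v ab.1 ab.2 ∉ S) :=
              Finset.mem_filter.mpr ⟨Finset.mem_univ _, hab⟩
            rw [hmv] at hm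
            exact Finset.mem_singleton.mp hm
          · intro hab
            rw [hab]
            have hm : mv ∈ ((univ : Finset (Bool × Bool)).filter fun ab => p v ab.1 ab.2 ∉ S) := by
              rw [hmv]
              exact Finset.mem_singleton_self mv
            exact (Finset.mem_filter.mp hm).2
        have hnot1 : ∀ (w : Fin m → Bool) (k : Fin m) (b : Bool),
            ¬ (∀ α β : Bool, p (Function.update w k α) β b ∈ S) := by
          intro w k b hcontra
          exact hS ⟨p w false b, Fin.castAdd 2 k, i₀ m, ca_ne_i0 k,
            fun α β => by rw [stp1]; exact hcontra α β⟩
        have hnot2 : ∀ (w : Fin m → Bool) (k : Fin m) (a : Bool),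
            ¬ (∀ α β : Bool, p (Function.update w k α) a β ∈ S) := by
          intro w k a hcontra
          exact hS ⟨p w a false, Fin.castAdd 2 k, i₁ m, ca_ne_i1 k,
            fun α β => by rw [stp2]; exact hcontra α β⟩
        have hadj : ∀ (u : Fin m → Bool) (k : Fin m) (mu m' : Bool × Bool),
            (∀ ab : Bool × Bool, (p u ab.1 ab.2 ∉ S ↔ ab = mu)) →
            (∀ ab : Bool × Bool,
              (p (Function.update u k (!(u k))) ab.1 ab.2 ∉ S ↔ ab = m')) →
            m' = (!mu.1, !mu.2) := by
          intro u k mu m' hu hu'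
          have h2 : ∀ b : Bool, mu.2 = b ∨ m'.2 = b := by
            intro b
            by_contra hcon
            push_neg at hcon
            apply hnot1 u k b
            intro α β
            rcases bool_cases α (u k) with rfl | rfl
            · rw [Function.update_eq_self]
              by_contra hns
              have heq := (hu (β, b)).mp hns
              apply hcon.1
              rw [← heq]
            · by_contra hns
              have heq := (hu' (β, b)).mp hns
              apply hcon.2
              rw [← heq]
          have h1 : ∀ a : Bool, mu.1 = a ∨ m'.1 = a := by
            intro a
            by_contra hcon
            push_neg at hcon
            apply hnot2 u k a
            intro α β
            rcases bool_cases α (u k) with rfl | rfl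
            · rw [Function.update_eq_self]
              by_contra hns
              have heq := (hu (a, β)).mp hns
              apply hcon.1
              rw [← heq]
            · by_contra hns
              have heq := (hu' (a, β)).mp hns
              apply hcon.2
              rw [← heq]
          have e2 : m'.2 = !mu.2 := by
            rcases h2 false with hf | hf <;> rcases h2 true with ht | ht <;> simp_all
          have e1 : m'.1 = !mu.1 := by
            rcases h1 false with hf | hf <;> rcases h1 true with ht | ht <;> simp_all
          exact Prod.ext e1 e2
        obtain ⟨m00, hm00⟩ := hmiss _ (hmem3 false false)
        obtain ⟨m10, hm10⟩ := hmiss _ (hmem3 true false)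
        obtain ⟨m01, hm01⟩ := hmiss _ (hmem3 false true)
        obtain ⟨m11, hm11⟩ := hmiss _ (hmem3 true true)
        have r10 : m10 = (!m00.1, !m00.2) := by
          apply hadj (st x i j false false) i m00 m10 hm00
          have hupd : Function.update (st x i j false false) i (!(st x i j false false i))
              = st x i j true false := by
            rw [st_apply_i hij, Bool.not_false, st_update_i hij]
          rw [hupd]
          exact hm10
        have r01 : m01 = (!m00.1, !m00.2) := by
          apply hadj (st x i j false false) j m00 m01 hm00
          have hupd : Function.update (st x i j false false) j (!(st x i j false false j))
              = st x i j false true := by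
            rw [st_apply_j, Bool.not_false, st_update_j hij]
          rw [hupd]
          exact hm01
        have r11 : m11 = (!m10.1, !m10.2) := by
          apply hadj (st x i j true false) j m10 m11 hm10
          have hupd : Function.update (st x i j true false) j (!(st x i j true false j))
              = st x i j true true := by
            rw [st_apply_j, Bool.not_false, st_update_j hij]
          rw [hupd]
          exact hm11
        have rm11 : m11 = m00 := by
          rw [r11, r10]
          simp
        have key : ((m00.1, !m00.2) : Bool × Bool) ≠ m00 := by
          intro h
          have := congrArg Prod.snd h
          simp at this
        have key' : ((m00.1, !m00.2) : Bool × Bool) ≠ (!m00.1, !m00.2) := by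
          intro h
          have := congrArg Prod.fst h
          simp at this
        have hin : ∀ a b : Bool, p (st x i j a b) m00.1 (!m00.2) ∈ S := by
          intro a b
          by_contra hns
          cases a <;> cases b
          · exact key ((hm00 _).mp hns)
          · exact key' (((hm01 _).mp hns).trans r01)
          · exact key' (((hm10 _).mp hns).trans r10)
          · exact key (((hm11 _).mp hns).trans rm11)
        exact hS ⟨p x m00.1 (!m00.2), Fin.castAdd 2 i, Fin.castAdd 2 j,
          fun h => hij (ca_inj h), fun a b => by rw [stp3 x hij]; exact hin a b⟩
      have hUb : 3 * U.card ≤ 2 ^ (m + 1) + 2 := ih m (by omega) U hUsq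
      have hS_eq : S.card = ∑ v ∈ (univ : Finset (Fin m → Bool)), fdeg S v := by
        rw [hfib]
        exact Finset.sum_congr rfl fun v _ => hfibdeg v
      have hpow1 : (2 : ℕ) ^ (m + 2 + 1) = 4 * 2 ^ (m + 1) := by ring
      have hpow2 : (2 : ℕ) ^ (m + 1) = 2 * 2 ^ m := by ring
      omega

lemma cubeWeight_eq_sum (x : Fin n → Bool) :
    cubeWeight x = ∑ k, if x k = true then 1 else 0 := Finset.card_filter _ _

lemma wupd (y : Fin n → Bool) (t : Fin n) (c : Bool) :
    cubeWeight (Function.update y t c) + (if y t then 1 else 0)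
      = cubeWeight y + (if c then 1 else 0) := by
  rw [cubeWeight_eq_sum, cubeWeight_eq_sum]
  have h1 : (fun k => if Function.update y t c k = true then (1 : ℕ) else 0)
      = Function.update (fun k => if y k = true then (1 : ℕ) else 0) t
          (if c = true then 1 else 0) := by
    funext k
    rcases eq_or_ne k t with rfl | hk
    · rw [Function.update_self, Function.update_self]
    · rw [Function.update_of_ne hk, Function.update_of_ne hk]
  have h2 : ∑ k, (if Function.update y t c k = true then (1 : ℕ) else 0)
      = (if c = true then 1 else 0) + ∑ k ∈ Finset.univ \ {t}, (if y k = true then 1 else 0) := by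
    rw [show (∑ k, (if Function.update y t c k = true then (1 : ℕ) else 0))
        = ∑ k, Function.update (fun k => if y k = true then (1 : ℕ) else 0) t
            (if c = true then 1 else 0) k from by rw [← h1]]
    exact Finset.sum_update_of_mem (Finset.mem_univ t) _ _
  have h3 : ∑ k, (if y k = true then (1 : ℕ) else 0)
      = ∑ k ∈ Finset.univ \ {t}, (if y k = true then (1 : ℕ) else 0)
        + (if y t = true then 1 else 0) :=
    Finset.sum_eq_sum_sdiff_singleton_add (Finset.mem_univ t) _
  omega

lemma upd_w (y : Fin n → Bool) (t : Fin n) (c : Bool) :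
    cubeWeight (Function.update y t c)
      = cubeWeight (Function.update y t false) + (if c then 1 else 0) := by
  have h1 := wupd y t c
  have h2 := wupd y t false
  simp only [if_neg (by simp : ¬ (false = true))] at h2
  omega

/-- Weight of the four vertices of a square. -/
lemma weight_st (x : Fin n → Bool) {i j : Fin n} (hij : i ≠ j) (a b : Bool) :
    cubeWeight (st x i j a b)
      = cubeWeight (st x i j false false) + (if a then 1 else 0) + (if b then 1 else 0) := by
  have h1 : cubeWeight (st x i j a b)
      = cubeWeight (st x i j a false) + (if b then 1 else 0) := by
    rw [← st_update_j hij a false b, upd_w, st_update_j hij a false false]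
  have h2 : cubeWeight (st x i j a false)
      = cubeWeight (st x i j false false) + (if a then 1 else 0) := by
    rw [← st_update_i hij false false a, upd_w, st_update_i hij false false false]
  rw [h1, h2]

/-- The mod-3 weight-class complements are square-free. -/
lemma sqfree_weightclass (r : ℕ) (hr : r < 3) :
    ¬ HasSq ((univ : Finset (Fin n → Bool)).filter fun x => cubeWeight x % 3 ≠ r) := by
  rintro ⟨x, i, j, hij, hall⟩
  have hmem : ∀ a b : Bool, cubeWeight (st x i j a b) % 3 ≠ r :=
    fun a b => (Finset.mem_filter.mp (hall a b)).2
  have h00 := hmem false false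
  have h10 := hmem true false
  have h11 := hmem true true
  rw [weight_st x hij true false] at h10
  rw [weight_st x hij true true] at h11
  norm_num at h10 h11
  omega

/-- The three weight-class complements have total size `2^(n+1)`. -/
lemma sum_weightclass :
    ∑ r ∈ range 3,
      ((univ : Finset (Fin n → Bool)).filter fun x => cubeWeight x % 3 ≠ r).card
      = 2 ^ (n + 1) := by
  have h1 : ∀ r, ((univ : Finset (Fin n → Bool)).filter fun x => cubeWeight x % 3 ≠ r).card
      = ∑ x : Fin n → Bool, if cubeWeight x % 3 ≠ r then 1 else 0 :=
    fun r => Finset.card_filter _ _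
  rw [Finset.sum_congr rfl fun r _ => h1 r, Finset.sum_comm]
  have h2 : ∀ x : Fin n → Bool,
      ∑ r ∈ range 3, (if cubeWeight x % 3 ≠ r then (1 : ℕ) else 0) = 2 := by
    intro x
    have hm : cubeWeight x % 3 < 3 := Nat.mod_lt _ (by norm_num)
    rcases (show cubeWeight x % 3 = 0 ∨ cubeWeight x % 3 = 1 ∨ cubeWeight x % 3 = 2 by omega)
      with h | h | h <;> rw [h] <;> decide
  rw [Finset.sum_congr rfl fun x _ => h2 x, Finset.sum_const, card_univ_bool, smul_eq_mul]
  ring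

end Kost


/-- Kostochka's theorem: for n ≥ 2 the maximum size of a subset of {0,1}^n containing no
embedded copy of the full 2-dimensional subcube is ⌈2^(n+1)/3⌉. -/
theorem kostochka (n : ℕ) (hn : 2 ≤ n) :
    exc n (Set.univ : Set (Fin 2 → Bool)) = ⌈(2 ^ (n + 1) : ℚ) / 3⌉₊ := by
  classical
  set g : ℕ := ⌈(2 ^ (n + 1) : ℚ) / 3⌉₊ with hg
  have hg_le : 3 * g ≤ 2 ^ (n + 1) + 2 := by
    have h1 : (g : ℚ) < 2 ^ (n + 1) / 3 + 1 := by
      rw [hg]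
      exact Nat.ceil_lt_add_one (by positivity)
    have h3 : (3 * g : ℚ) < (2 ^ (n + 1) : ℚ) + 3 := by linarith
    have h4 : 3 * g < 2 ^ (n + 1) + 3 := by exact_mod_cast h3
    omega
  have hg_ge : ∀ k : ℕ, 3 * k ≤ 2 ^ (n + 1) + 2 → k ≤ g := by
    intro k hk
    by_contra hgt
    push_neg at hgt
    have h1 : (2 ^ (n + 1) : ℚ) / 3 ≤ (g : ℚ) := by
      rw [hg]
      exact Nat.le_ceil _
    have h2 : (2 ^ (n + 1) : ℚ) ≤ 3 * (g : ℚ) := by linarith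
    have h3 : (2 : ℕ) ^ (n + 1) ≤ 3 * g := by exact_mod_cast h2
    omega
  have hupper : ∀ S : Finset (Fin n → Bool),
      IsFree (Set.univ : Set (Fin 2 → Bool)) (S : Set (Fin n → Bool)) → S.card ≤ g := by
    intro S hfree
    have hsq : ¬ Kost.HasSq S := fun h => Kost.not_isFree_of_hasSq h hfree
    exact hg_ge _ (Kost.upper n S hsq)
  have hlower : ∃ S : Finset (Fin n → Bool),
      IsFree (Set.univ : Set (Fin 2 → Bool)) (S : Set (Fin n → Bool)) ∧ S.card = g := by
    have hsum := Kost.sum_weightclass (n := n)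
    have hex : ∃ r ∈ Finset.range 3,
        g ≤ ((univ : Finset (Fin n → Bool)).filter fun x => cubeWeight x % 3 ≠ r).card := by
      by_contra hcon
      push_neg at hcon
      have hb : ∑ r ∈ Finset.range 3,
          (((univ : Finset (Fin n → Bool)).filter fun x => cubeWeight x % 3 ≠ r).card + 1)
          ≤ ∑ _r ∈ Finset.range 3, g :=
        Finset.sum_le_sum (fun r hr => by have := hcon r hr; omega)
      rw [Finset.sum_add_distrib, hsum] at hb
      simp only [Finset.sum_const, Finset.card_range, smul_eq_mul, mul_one] at hb
      omega
    obtain ⟨r, hr, hge⟩ := hex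
    have hr3 : r < 3 := Finset.mem_range.mp hr
    set S := (univ : Finset (Fin n → Bool)).filter fun x => cubeWeight x % 3 ≠ r with hSdef
    have hfree : IsFree (Set.univ : Set (Fin 2 → Bool)) (S : Set (Fin n → Bool)) := by
      by_contra h
      exact Kost.sqfree_weightclass r hr3 (Kost.hasSq_of_not_isFree h)
    exact ⟨S, hfree, le_antisymm (hupper S hfree) hge⟩
  obtain ⟨S0, hS0free, hS0card⟩ := hlower
  rw [exc]
  apply le_antisymm
  · apply csSup_le
    · exact ⟨g, S0, hS0free, hS0card⟩
    · rintro k ⟨S, hfree, rfl⟩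
      exact hupper S hfree
  · apply le_csSup
    · refine ⟨g, ?_⟩
      rintro k ⟨S, hfree, rfl⟩
      exact hupper S hfree
    · exact ⟨S0, hS0free, hS0card⟩
end

section
/- λ(F_1) = 1/2, where F_1 = {(0,0,0),(1,0,0),(0,1,0),(0,0,1)} ⊆ V_3; that is, exc(n, F_1)/2^n → 1/2 as n → ∞. -/
open Finset Filter Topology

/-- F₁ = {(0,0,0),(1,0,0),(0,1,0),(0,0,1)} ⊆ V₃. -/
def F1 : Set (Fin 3 → Bool) :=
  {![false, false, false], ![true, false, false], ![false, true, false], ![false, false, true]}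

/-- F₂ = {(0,0,0),(1,1,0),(1,0,1),(0,1,1)} ⊆ V₃. -/
def F2 : Set (Fin 3 → Bool) :=
  {![false, false, false], ![true, true, false], ![true, false, true], ![false, true, true]}

/-- F₃ = {(0,0,0),(1,1,1)} ⊆ V₃. -/
def F3 : Set (Fin 3 → Bool) :=
  {![false, false, false], ![true, true, true]}

/-! ### Auxiliary definitions and lemmas -/

def flipBit {n : ℕ} (j : Fin n) (x : Fin n → Bool) : Fin n → Bool :=
  Function.update x j (!x j)

lemma flipBit_involutive {n : ℕ} (j : Fin n) : Function.Involutive (flipBit j) := by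
  intro x
  funext k
  by_cases hk : k = j
  · subst hk; simp [flipBit]
  · simp [flipBit, Function.update_of_ne hk]

lemma weight_cast {n : ℕ} (x : Fin n → Bool) :
    (cubeWeight x : ZMod 2) = ∑ i : Fin n, (if x i = true then 1 else 0 : ZMod 2) := by
  rw [cubeWeight, Finset.card_filter, Nat.cast_sum]
  exact Finset.sum_congr rfl fun i _ => by split <;> simp

lemma parity_ne {n : ℕ} {a b : Fin n → Bool} (h : hammingDist a b = 1) :
    (cubeWeight a : ZMod 2) ≠ (cubeWeight b : ZMod 2) := by
  intro he
  have key : (cubeWeight a : ZMod 2) - (cubeWeight b : ZMod 2) = (hammingDist a b : ZMod 2) := by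
    rw [weight_cast, weight_cast, ← Finset.sum_sub_distrib, hammingDist, Finset.card_filter,
      Nat.cast_sum]
    refine Finset.sum_congr rfl fun i _ => ?_
    cases h1 : a i <;> cases h2 : b i <;> simp [h1, h2] <;> decide
  rw [he, sub_self, h] at key
  simp at key

lemma dist_flip {n : ℕ} (x : Fin n → Bool) (j : Fin n) :
    hammingDist x (flipBit j x) = 1 := by
  rw [hammingDist]
  have : (Finset.univ.filter fun i => x i ≠ flipBit j x i) = {j} := by
    ext i
    by_cases hk : i = j
    · subst hk; rw [Finset.mem_filter]; simp [flipBit]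
    · rw [Finset.mem_filter]; simp [flipBit, Function.update_of_ne hk, hk]
  rw [this, Finset.card_singleton]

lemma card_odd (n : ℕ) :
    (Finset.univ.filter fun x : Fin (n+1) → Bool => (cubeWeight x : ZMod 2) = 1).card = 2 ^ n := by
  classical
  have hflip : ∀ x : Fin (n+1) → Bool,
      ((cubeWeight (flipBit 0 x) : ZMod 2) = 1) ↔ ¬ ((cubeWeight x : ZMod 2) = 1) := by
    intro x
    have h := parity_ne (dist_flip x 0)
    revert h
    generalize (cubeWeight x : ZMod 2) = a
    generalize (cubeWeight (flipBit 0 x) : ZMod 2) = b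
    revert a b; decide
  have hb : (Finset.univ.filter fun x : Fin (n+1) → Bool => (cubeWeight x : ZMod 2) = 1).card
      = (Finset.univ.filter fun x : Fin (n+1) → Bool => ¬ ((cubeWeight x : ZMod 2) = 1)).card := by
    apply Finset.card_bij (fun x _ => flipBit 0 x)
    · intro a ha
      simp only [Finset.mem_filter, Finset.mem_univ, true_and] at ha ⊢
      exact fun hcon => (hflip a).mp hcon ha
    · intro a _ b _ hab
      exact (flipBit_involutive 0).injective hab
    · intro b hb
      simp only [Finset.mem_filter, Finset.mem_univ, true_and] at hb
      refine ⟨flipBit 0 b, ?_, flipBit_involutive 0 b⟩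
      simp only [Finset.mem_filter, Finset.mem_univ, true_and]
      exact (hflip b).mpr hb
  have hsum := Finset.card_filter_add_card_filter_not
    (s := (Finset.univ : Finset (Fin (n+1) → Bool)))
    (p := fun x => (cubeWeight x : ZMod 2) = 1)
  have hcard : (Finset.univ : Finset (Fin (n+1) → Bool)).card = 2 ^ (n+1) := by
    simp [Finset.card_univ]
  rw [hcard, ← hb, pow_succ] at hsum
  omega

lemma isFree_empty {n : ℕ} : IsFree F1 ((∅ : Finset (Fin n → Bool)) : Set (Fin n → Bool)) := by
  intro i _ hsub
  have : i ![false, false, false] ∈ ((∅ : Finset (Fin n → Bool)) : Set (Fin n → Bool)) :=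
    hsub ⟨_, by left; rfl, rfl⟩
  simpa using this

lemma excSet_bddAbove {n : ℕ} :
    BddAbove {k : ℕ | ∃ S : Finset (Fin n → Bool), IsFree F1 (S : Set (Fin n → Bool)) ∧ S.card = k} := by
  refine ⟨2 ^ n, ?_⟩
  rintro k ⟨S, -, rfl⟩
  have h := Finset.card_le_univ S
  simpa [Finset.card_univ] using h

lemma isFree_odd (n : ℕ) :
    IsFree F1 ((Finset.univ.filter fun x : Fin n → Bool => (cubeWeight x : ZMod 2) = 1) :
      Set (Fin n → Bool)) := by
  intro i hi hsub
  have h0 : i ![false, false, false] ∈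
      (Finset.univ.filter fun x : Fin n → Bool => (cubeWeight x : ZMod 2) = 1) :=
    hsub ⟨_, by left; rfl, rfl⟩
  have h1 : i ![true, false, false] ∈
      (Finset.univ.filter fun x : Fin n → Bool => (cubeWeight x : ZMod 2) = 1) :=
    hsub ⟨_, by right; left; rfl, rfl⟩
  have hd : hammingDist (![false, false, false] : Fin 3 → Bool) ![true, false, false] = 1 := by
    decide
  have hne := parity_ne (hi.2 _ _ hd)
  simp only [Finset.mem_filter] at h0 h1
  rw [h0.2, h1.2] at hne
  exact hne rfl

lemma exc_lower (n : ℕ) : 2 ^ n ≤ exc (n+1) F1 :=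
  le_csSup excSet_bddAbove ⟨_, isFree_odd (n+1), card_odd n⟩

lemma bool_xor_ne {a b c : Bool} : (xor a c ≠ xor b c) ↔ a ≠ b := by
  revert a b c; decide

def embAux {n : ℕ} (x : Fin n → Bool) (j₁ j₂ j₃ : Fin n) (y : Fin 3 → Bool)
    (k : Fin n) : Bool :=
  xor (if k = j₁ then y 0 else if k = j₂ then y 1 else if k = j₃ then y 2 else false) (x k)

lemma degree_le {n : ℕ} {S : Finset (Fin n → Bool)}
    (hS : IsFree F1 (S : Set (Fin n → Bool))) {x : Fin n → Bool} (hx : x ∈ S) :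
    (Finset.univ.filter fun j => flipBit j x ∈ S).card ≤ 2 := by
  by_contra hcon
  push_neg at hcon
  obtain ⟨j₁, j₂, j₃, hm1, hm2, hm3, h12, h13, h23⟩ := Finset.two_lt_card_iff.mp hcon
  simp only [Finset.mem_filter, Finset.mem_univ, true_and] at hm1 hm2 hm3
  have hginj : Function.Injective (![j₁, j₂, j₃] : Fin 3 → Fin n) := by
    intro a b hab
    fin_cases a <;> fin_cases b <;> simp_all [Matrix.cons_val_zero, Matrix.cons_val_one,
      Matrix.head_cons, Matrix.cons_val_two, Matrix.tail_cons]
  have key : ∀ y y' : Fin 3 → Bool,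
      (Finset.univ.filter fun k => embAux x j₁ j₂ j₃ y k ≠ embAux x j₁ j₂ j₃ y' k)
        = (Finset.univ.filter fun m => y m ≠ y' m).image ![j₁, j₂, j₃] := by
    intro y y'
    ext k
    simp only [Finset.mem_filter, Finset.mem_univ, true_and, Finset.mem_image]
    constructor
    · intro hne
      by_cases hk1 : k = j₁
      · subst hk1
        exact ⟨0, by simpa [embAux, bool_xor_ne] using hne, by simp⟩
      · by_cases hk2 : k = j₂
        · subst hk2
          exact ⟨1, by simpa [embAux, hk1, bool_xor_ne] using hne, by simp⟩
        · by_cases hk3 : k = j₃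
          · subst hk3
            exact ⟨2, by simpa [embAux, hk1, hk2, bool_xor_ne] using hne, by simp⟩
          · exact ((by simpa [embAux, hk1, hk2, hk3] using hne : False)).elim
    · rintro ⟨m, hm, rfl⟩
      fin_cases m
      · simpa [embAux, bool_xor_ne] using hm
      · simpa [embAux, bool_xor_ne, Ne.symm h12] using hm
      · simpa [embAux, bool_xor_ne, Ne.symm h13, Ne.symm h23] using hm
  have hdist : ∀ y y' : Fin 3 → Bool,
      hammingDist (embAux x j₁ j₂ j₃ y) (embAux x j₁ j₂ j₃ y') = hammingDist y y' := by
    intro y y'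
    show (Finset.univ.filter fun k => embAux x j₁ j₂ j₃ y k ≠ embAux x j₁ j₂ j₃ y' k).card
      = (Finset.univ.filter fun m => y m ≠ y' m).card
    rw [key]
    exact Finset.card_image_of_injective _ hginj
  have hembE : IsCubeEmbedding (embAux x j₁ j₂ j₃) := by
    constructor
    · intro y y' h
      have hd := hdist y y'
      rw [h, hammingDist_self] at hd
      exact hammingDist_eq_zero.mp hd.symm
    · intro y y' h
      rw [hdist]; exact h
  apply hS _ hembE
  have e0 : embAux x j₁ j₂ j₃ ![false, false, false] = x := by
    funext k
    simp [embAux]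
  have e1 : embAux x j₁ j₂ j₃ ![true, false, false] = flipBit j₁ x := by
    funext k
    by_cases hk : k = j₁
    · subst hk; simp [embAux, flipBit, Bool.xor_comm]
    · simp [embAux, hk, flipBit, Function.update_of_ne hk]
  have e2 : embAux x j₁ j₂ j₃ ![false, true, false] = flipBit j₂ x := by
    funext k
    by_cases hk : k = j₂
    · subst hk; simp [embAux, Ne.symm h12, flipBit, Bool.xor_comm]
    · by_cases hk1 : k = j₁ <;> simp [embAux, hk, hk1, h12, flipBit, Function.update_of_ne hk]
  have e3 : embAux x j₁ j₂ j₃ ![false, false, true] = flipBit j₃ x := by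
    funext k
    by_cases hk : k = j₃
    · subst hk; simp [embAux, Ne.symm h13, Ne.symm h23, flipBit, Bool.xor_comm]
    · by_cases hk1 : k = j₁ <;> by_cases hk2 : k = j₂ <;>
        simp [embAux, hk, hk1, hk2, h13, h23, flipBit, Function.update_of_ne hk]
  rintro z ⟨w, hw, rfl⟩
  rcases hw with rfl | rfl | rfl | rfl
  · rw [e0]; exact_mod_cast hx
  · rw [e1]; exact_mod_cast hm1
  · rw [e2]; exact_mod_cast hm2
  · rw [e3]; exact_mod_cast hm3

lemma count_bound {n : ℕ} {S : Finset (Fin n → Bool)}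
    (hS : IsFree F1 (S : Set (Fin n → Bool))) :
    n * (2 * S.card) ≤ n * 2 ^ n + 2 * S.card := by
  classical
  have hcardle : S.card ≤ 2 ^ n := by
    have h := Finset.card_le_univ S
    simpa [Finset.card_univ] using h
  have hdj : ∀ j : Fin n, 2 * S.card ≤ 2 ^ n + (S.filter fun x => flipBit j x ∈ S).card := by
    intro j
    have hsplit := Finset.card_filter_add_card_filter_not
      (s := S) (p := fun x => flipBit j x ∈ S)
    have hmaps : (S.filter fun x => flipBit j x ∉ S).card ≤ 2 ^ n - S.card := by
      have himg : ((S.filter fun x => flipBit j x ∉ S).image (flipBit j)) ⊆ Finset.univ \ S := by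
        intro z hz
        simp only [Finset.mem_image, Finset.mem_filter] at hz
        obtain ⟨a, ⟨_, ha2⟩, rfl⟩ := hz
        simp [ha2]
      have hci : ((S.filter fun x => flipBit j x ∉ S).image (flipBit j)).card
          = (S.filter fun x => flipBit j x ∉ S).card :=
        Finset.card_image_of_injective _ (flipBit_involutive j).injective
      have := Finset.card_le_card himg
      rw [hci, Finset.card_sdiff_of_subset (Finset.subset_univ S)] at this
      simpa [Finset.card_univ] using this
    omega
  have hsum : ∑ j : Fin n, (S.filter fun x => flipBit j x ∈ S).card
      = ∑ x ∈ S, (Finset.univ.filter fun j => flipBit j x ∈ S).card := by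
    simp_rw [Finset.card_filter]
    exact Finset.sum_comm
  calc n * (2 * S.card) = ∑ _j : Fin n, 2 * S.card := by
        rw [Finset.sum_const, Finset.card_univ, Fintype.card_fin, smul_eq_mul]
    _ ≤ ∑ j : Fin n, (2 ^ n + (S.filter fun x => flipBit j x ∈ S).card) :=
        Finset.sum_le_sum fun j _ => hdj j
    _ = n * 2 ^ n + ∑ j : Fin n, (S.filter fun x => flipBit j x ∈ S).card := by
        rw [Finset.sum_add_distrib, Finset.sum_const, Finset.card_univ, Fintype.card_fin,
          smul_eq_mul]
    _ ≤ n * 2 ^ n + 2 * S.card := by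
        rw [hsum]
        have h2 : ∑ x ∈ S, (Finset.univ.filter fun j => flipBit j x ∈ S).card
            ≤ ∑ _x ∈ S, 2 := Finset.sum_le_sum fun x hx => degree_le hS hx
        simp only [Finset.sum_const, smul_eq_mul] at h2
        omega

lemma exc_upper (n : ℕ) : n * (2 * exc n F1) ≤ n * 2 ^ n + 2 * exc n F1 := by
  obtain ⟨S, hfree, hcard⟩ : exc n F1 ∈ {k : ℕ | ∃ S : Finset (Fin n → Bool),
      IsFree F1 (S : Set (Fin n → Bool)) ∧ S.card = k} :=
    Nat.sSup_mem ⟨0, ∅, isFree_empty, Finset.card_empty⟩ excSet_bddAbove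
  rw [← hcard]
  exact count_bound hfree

/-- λ(F₁) = 1/2. -/
theorem lambda_F1 :
    Filter.Tendsto (fun n : ℕ => (exc n F1 : ℝ) / 2 ^ n) Filter.atTop (𝓝 (1 / 2)) := by
  have h2pos : ∀ n : ℕ, (0 : ℝ) < 2 ^ n := fun n => by positivity
  have hlb : ∀ᶠ n : ℕ in atTop, (1 / 2 : ℝ) ≤ (exc n F1 : ℝ) / 2 ^ n := by
    rw [eventually_atTop]
    refine ⟨1, fun n hn => ?_⟩
    obtain ⟨m, rfl⟩ : ∃ m, n = m + 1 := ⟨n - 1, by omega⟩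
    have h := exc_lower m
    have hR : (2 : ℝ) ^ m ≤ (exc (m + 1) F1 : ℝ) := by exact_mod_cast h
    rw [le_div_iff₀ (h2pos (m + 1))]
    have he : (1 / 2 : ℝ) * 2 ^ (m + 1) = 2 ^ m := by
      rw [pow_succ]; ring
    rw [he]
    exact hR
  have hub : ∀ᶠ n : ℕ in atTop,
      (exc n F1 : ℝ) / 2 ^ n ≤ (n : ℝ) / (2 * ((n : ℝ) - 1)) := by
    rw [eventually_atTop]
    refine ⟨2, fun n hn => ?_⟩
    have hnR : (2 : ℝ) ≤ (n : ℝ) := by exact_mod_cast hn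
    have hden : (0 : ℝ) < 2 * ((n : ℝ) - 1) := by linarith
    rw [div_le_div_iff₀ (h2pos n) hden]
    have h := exc_upper n
    have hR : (n : ℝ) * (2 * (exc n F1 : ℝ)) ≤ (n : ℝ) * 2 ^ n + 2 * (exc n F1 : ℝ) := by
      exact_mod_cast h
    have hexc : (0 : ℝ) ≤ (exc n F1 : ℝ) := Nat.cast_nonneg _
    nlinarith [hR]
  have hto : Tendsto (fun n : ℕ => (n : ℝ) / (2 * ((n : ℝ) - 1))) atTop (𝓝 (1 / 2)) := by
    have h1 : Tendsto (fun n : ℕ => ((n : ℝ) - 1)) atTop atTop := by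
      simpa [sub_eq_add_neg] using
        tendsto_atTop_add_const_right atTop (-1 : ℝ) tendsto_natCast_atTop_atTop
    have h2 : Tendsto (fun n : ℕ => 2 * ((n : ℝ) - 1)) atTop atTop :=
      h1.const_mul_atTop (by norm_num)
    have h3 : Tendsto (fun n : ℕ => (2 * ((n : ℝ) - 1))⁻¹) atTop (𝓝 0) :=
      h2.inv_tendsto_atTop
    have h4 : Tendsto (fun n : ℕ => 1 / 2 + (2 * ((n : ℝ) - 1))⁻¹) atTop (𝓝 (1 / 2 + 0)) :=
      tendsto_const_nhds.add h3
    rw [add_zero] at h4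
    apply h4.congr'
    rw [EventuallyEq, eventually_atTop]
    refine ⟨2, fun n hn => ?_⟩
    have hnR : (2 : ℝ) ≤ (n : ℝ) := by exact_mod_cast hn
    have hne : 2 * ((n : ℝ) - 1) ≠ 0 := ne_of_gt (by linarith)
    have hne' : (n : ℝ) - 1 ≠ 0 := ne_of_gt (by linarith)
    field_simp
    ring
  exact tendsto_of_tendsto_of_tendsto_of_le_of_le' tendsto_const_nhds hto hlb hub
end

section
/- λ(F_3) = 1/2, where F_3 = {(0,0,0),(1,1,1)} ⊆ V_3; that is, exc(n, F_3)/2^n → 1/2 as n → ∞. -/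
open Finset Filter Topology

section Aux

variable {n : ℕ}

lemma parityAux (x y : Fin n → Bool) :
    ((hammingDist x y : ZMod 2)) = (cubeWeight x : ZMod 2) + (cubeWeight y : ZMod 2) := by
  have h : hammingDist x y = (Finset.univ.filter fun i => x i ≠ y i).card := rfl
  rw [h, cubeWeight, cubeWeight, Finset.card_filter, Finset.card_filter, Finset.card_filter]
  push_cast
  rw [← Finset.sum_add_distrib]
  refine Finset.sum_congr rfl fun i _ => ?_
  cases hx : x i <;> cases hy : y i <;> simp [hx, hy] <;> decide

/-- The embedding of `Q_3` into `Q_n` using the first three coordinates, shifted by `x`. -/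
def emb3 (h3 : 3 ≤ n) (x : Fin n → Bool) (a : Fin 3 → Bool) : Fin n → Bool :=
  fun j => if h : (j : ℕ) < 3 then xor (a ⟨j, h⟩) (x j) else x j

lemma emb3_dist (h3 : 3 ≤ n) (x : Fin n → Bool) (a b : Fin 3 → Bool) :
    hammingDist (emb3 h3 x a) (emb3 h3 x b) = hammingDist a b := by
  have hset : (Finset.univ.filter fun j : Fin n => emb3 h3 x a j ≠ emb3 h3 x b j)
      = (Finset.univ.filter fun k : Fin 3 => a k ≠ b k).map (Fin.castLEEmb h3) := by
    ext j
    simp only [Finset.mem_filter, Finset.mem_map, Finset.mem_univ, true_and]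
    constructor
    · intro hj
      by_cases h : (j : ℕ) < 3
      · refine ⟨⟨j, h⟩, ?_, by ext; rfl⟩
        simp only [emb3, dif_pos h] at hj
        intro hab
        exact hj (by rw [hab])
      · simp [emb3, dif_neg h] at hj
    · rintro ⟨k, hk, rfl⟩
      have hlt : ((Fin.castLEEmb h3 k : Fin n) : ℕ) < 3 := k.isLt
      show (if h : ((Fin.castLEEmb h3 k : Fin n) : ℕ) < 3 then xor (a ⟨_, h⟩) (x _) else x _) ≠ _
      rw [dif_pos hlt, emb3, dif_pos hlt]
      have : (⟨((Fin.castLEEmb h3 k : Fin n) : ℕ), hlt⟩ : Fin 3) = k := by ext; rfl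
      rw [this]
      cases hx : x (Fin.castLEEmb h3 k) <;> cases ha : a k <;> cases hb : b k <;>
        simp_all
  show (Finset.univ.filter fun j : Fin n => emb3 h3 x a j ≠ emb3 h3 x b j).card = _
  rw [hset, Finset.card_map]
  rfl

lemma emb3_isEmbedding (h3 : 3 ≤ n) (x : Fin n → Bool) : IsCubeEmbedding (emb3 h3 x) := by
  constructor
  · intro a b hab
    have := emb3_dist h3 x a b
    rw [hab, hammingDist_self] at this
    exact (hammingDist_eq_zero.mp this.symm)
  · intro a b h
    rw [emb3_dist h3 x a b]; exact h

lemma emb3_zero (h3 : 3 ≤ n) (x : Fin n → Bool) : emb3 h3 x ![false, false, false] = x := by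
  funext j
  by_cases h : (j : ℕ) < 3
  · have hv : ∀ k : Fin 3, ![false, false, false] k = false := by decide
    simp [emb3, dif_pos h, hv]
  · simp [emb3, dif_neg h]

/-- Flipping the first three coordinates. -/
def flip3 (h3 : 3 ≤ n) (x : Fin n → Bool) : Fin n → Bool :=
  emb3 h3 x ![true, true, true]

lemma flip3_eq (h3 : 3 ≤ n) (x : Fin n → Bool) (j : Fin n) :
    flip3 h3 x j = if (j : ℕ) < 3 then !(x j) else x j := by
  have hv : ∀ k : Fin 3, ![true, true, true] k = true := by decide
  by_cases h : (j : ℕ) < 3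
  · simp [flip3, emb3, dif_pos h, hv, if_pos h, Bool.true_xor]
  · simp [flip3, emb3, dif_neg h, if_neg h]

lemma flip3_involutive (h3 : 3 ≤ n) : Function.Involutive (flip3 h3) := by
  intro x
  funext j
  rw [flip3_eq, flip3_eq]
  by_cases h : (j : ℕ) < 3 <;> simp [h]

lemma parity_01 (x y : Fin n → Bool) (hxy : hammingDist x y = 1) :
    (cubeWeight x : ZMod 2) + (cubeWeight y : ZMod 2) = 1 := by
  have := parityAux x y
  rw [hxy] at this
  simpa using this.symm

/-- The images of `(0,0,0)` and `(1,1,1)` under any cube embedding have different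
weight parities. -/
lemma emb_parity {i : (Fin 3 → Bool) → (Fin n → Bool)} (hi : IsCubeEmbedding i) :
    (cubeWeight (i ![false, false, false]) : ZMod 2)
      + (cubeWeight (i ![true, true, true]) : ZMod 2) = 1 := by
  have h01 : hammingDist ![false, false, false] ![true, false, false] = 1 := by decide
  have h12 : hammingDist ![true, false, false] ![true, true, false] = 1 := by decide
  have h23 : hammingDist ![true, true, false] ![true, true, true] = 1 := by decide
  have e01 := parity_01 _ _ (hi.2 _ _ h01)
  have e12 := parity_01 _ _ (hi.2 _ _ h12)
  have e23 := parity_01 _ _ (hi.2 _ _ h23)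
  have key : ∀ a b c d : ZMod 2, a + b = 1 → b + c = 1 → c + d = 1 → a + d = 1 := by decide
  exact key _ _ _ _ e01 e12 e23

/-- The even-weight set. -/
def evenSet (n : ℕ) : Finset (Fin n → Bool) :=
  Finset.univ.filter fun x => (cubeWeight x : ZMod 2) = 0

lemma evenSet_free : IsFree F3 ((evenSet n : Finset (Fin n → Bool)) : Set (Fin n → Bool)) := by
  intro i hi hsub
  have h0 : i ![false, false, false] ∈ evenSet n := by
    apply hsub; exact ⟨_, Or.inl rfl, rfl⟩
  have h1 : i ![true, true, true] ∈ evenSet n := by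
    apply hsub; exact ⟨_, Or.inr rfl, rfl⟩
  rw [evenSet, Finset.mem_filter] at h0 h1
  have := emb_parity hi
  rw [h0.2, h1.2] at this
  simp at this

lemma card_evenSet (h3 : 3 ≤ n) : (evenSet n).card = 2 ^ (n - 1) := by
  set O : Finset (Fin n → Bool) :=
    Finset.univ.filter fun x => ¬ ((cubeWeight x : ZMod 2) = 0) with hO
  have hflip_parity : ∀ x : Fin n → Bool,
      (cubeWeight (Function.update x ⟨0, by omega⟩ (!(x ⟨0, by omega⟩))) : ZMod 2)
        = (cubeWeight x : ZMod 2) + 1 := by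
    intro x
    set j0 : Fin n := ⟨0, by omega⟩
    have hd : hammingDist x (Function.update x j0 (!(x j0))) = 1 := by
      have : (Finset.univ.filter fun i : Fin n =>
          x i ≠ Function.update x j0 (!(x j0)) i) = {j0} := by
        ext i
        simp only [Finset.mem_filter, Finset.mem_univ, true_and, Finset.mem_singleton,
          Function.update_apply]
        by_cases h : i = j0 <;> simp [h]
      show (Finset.univ.filter fun i : Fin n =>
          x i ≠ Function.update x j0 (!(x j0)) i).card = 1
      rw [this, Finset.card_singleton]
    have := parity_01 _ _ hd
    have h2 : ∀ a b : ZMod 2, a + b = 1 → b = a + 1 := by decide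
    exact h2 _ _ this
  set f : (Fin n → Bool) → (Fin n → Bool) :=
    fun x => Function.update x ⟨0, by omega⟩ (!(x ⟨0, by omega⟩)) with hf
  have hinv : Function.Involutive f := by
    intro x
    funext i
    by_cases h : i = (⟨0, by omega⟩ : Fin n) <;> simp [hf, Function.update_apply, h]
  have hcard : (evenSet n).card = O.card := by
    apply Finset.card_bij' (fun x _ => f x) (fun x _ => f x)
    · intro x hx
      rw [evenSet, Finset.mem_filter] at hx
      rw [hO, Finset.mem_filter]
      refine ⟨Finset.mem_univ _, ?_⟩
      rw [hflip_parity x, hx.2]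
      decide
    · intro x hx
      rw [hO, Finset.mem_filter] at hx
      rw [evenSet, Finset.mem_filter]
      refine ⟨Finset.mem_univ _, ?_⟩
      have h1 : (cubeWeight x : ZMod 2) = 1 := by
        have : ∀ a : ZMod 2, ¬ a = 0 → a = 1 := by decide
        exact this _ hx.2
      rw [hflip_parity x, h1]
      decide
    · intro x _; exact hinv x
    · intro x _; exact hinv x
  have htot : (evenSet n).card + O.card = 2 ^ n := by
    rw [evenSet, hO]
    rw [Finset.card_filter_add_card_filter_not]
    simp [Finset.card_univ]
  have h2n : 2 ^ n = 2 * 2 ^ (n - 1) := by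
    conv_lhs => rw [show n = (n - 1) + 1 by omega]
    ring
  omega

lemma free_card_le (h3 : 3 ≤ n) (S : Finset (Fin n → Bool))
    (hS : IsFree F3 (S : Set (Fin n → Bool))) : S.card ≤ 2 ^ (n - 1) := by
  set T : Finset (Fin n → Bool) := S.image (flip3 h3) with hT
  have hdisj : Disjoint S T := by
    rw [Finset.disjoint_left]
    intro y hyS hyT
    rw [hT, Finset.mem_image] at hyT
    obtain ⟨x, hxS, hxy⟩ := hyT
    apply hS (emb3 h3 x) (emb3_isEmbedding h3 x)
    rintro z ⟨w, hw, rfl⟩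
    rcases hw with hw | hw
    · subst hw; rw [emb3_zero]; exact hxS
    · rw [Set.mem_singleton_iff] at hw
      subst hw
      show (emb3 h3 x ![true, true, true]) ∈ (S : Set (Fin n → Bool))
      rw [show emb3 h3 x ![true, true, true] = flip3 h3 x from rfl, hxy]
      exact hyS
  have hcardT : T.card = S.card := Finset.card_image_of_injective S (flip3_involutive h3).injective
  have := Finset.card_union_of_disjoint hdisj
  have hle : (S ∪ T).card ≤ 2 ^ n := by
    calc (S ∪ T).card ≤ (Finset.univ : Finset (Fin n → Bool)).card :=
          Finset.card_le_card (Finset.subset_univ _)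
      _ = 2 ^ n := by simp [Finset.card_univ]
  have h2n : 2 ^ n = 2 * 2 ^ (n - 1) := by
    conv_lhs => rw [show n = (n - 1) + 1 by omega]
    ring
  omega

lemma exc_eq (h3 : 3 ≤ n) : exc n F3 = 2 ^ (n - 1) := by
  have hmem : 2 ^ (n - 1) ∈ {k : ℕ | ∃ S : Finset (Fin n → Bool),
      IsFree F3 (S : Set (Fin n → Bool)) ∧ S.card = k} :=
    ⟨evenSet n, evenSet_free, card_evenSet h3⟩
  have hub : ∀ k ∈ {k : ℕ | ∃ S : Finset (Fin n → Bool),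
      IsFree F3 (S : Set (Fin n → Bool)) ∧ S.card = k}, k ≤ 2 ^ (n - 1) := by
    rintro k ⟨S, hS, rfl⟩
    exact free_card_le h3 S hS
  exact le_antisymm (csSup_le ⟨_, hmem⟩ hub) (le_csSup ⟨2 ^ (n - 1), hub⟩ hmem)

end Aux

/-- λ(F₃) = 1/2. -/
theorem lambda_F3 :
    Filter.Tendsto (fun n : ℕ => (exc n F3 : ℝ) / 2 ^ n) Filter.atTop (𝓝 (1 / 2)) := by
  apply Filter.Tendsto.congr' (f₁ := fun _ : ℕ => (1 : ℝ) / 2)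
  · rw [Filter.EventuallyEq, Filter.eventually_atTop]
    refine ⟨3, fun n hn => ?_⟩
    rw [exc_eq hn]
    have h2n : (2 : ℝ) ^ n = 2 * 2 ^ (n - 1) := by
      conv_lhs => rw [show n = (n - 1) + 1 by omega]
      ring
    rw [h2n]
    have : (2 : ℝ) ^ (n - 1) ≠ 0 := by positivity
    push_cast
    field_simp
  · exact tendsto_const_nhds
end

section
/- λ({F_1, F_2}) = 1/3; that is, exc(n, {F_1,F_2})/2^n → 1/3 as n → ∞, where exc(n, {F_1,F_2}) is the maximum size of a subset of V_n that is simultaneously F_1-free and F_2-free. In particular this is strictly smaller than min{λ(F_1), λ(F_2)} = 1/2. -/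
open Finset Filter Topology

/-- The maximum size of a subset of V_n that is simultaneously F-free and G-free. -/
noncomputable def exc2 {d : ℕ} (n : ℕ) (F G : Set (Fin d → Bool)) : ℕ :=
  sSup {k : ℕ | ∃ S : Finset (Fin n → Bool),
    IsFree F (S : Set (Fin n → Bool)) ∧ IsFree G (S : Set (Fin n → Bool)) ∧ S.card = k}


namespace LF

variable {n : ℕ}

/-- flip coordinate `j` of a cube vertex -/
def flp (j : Fin n) (x : Fin n → Bool) : Fin n → Bool := Function.update x j (!x j)

lemma flp_apply (j t : Fin n) (x : Fin n → Bool) :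
    flp j x t = if t = j then !(x t) else x t := by
  simp only [flp, Function.update_apply]; split <;> simp_all

@[simp] lemma flp_flp (j : Fin n) (x) : flp j (flp j x) = x := by
  funext t; by_cases h : t = j <;> simp [flp_apply, h]

lemma flp_comm (j k : Fin n) (x) : flp j (flp k x) = flp k (flp j x) := by
  funext t
  by_cases h1 : t = j <;> by_cases h2 : t = k <;> simp_all [flp_apply]

lemma flp_injective (j : Fin n) : Function.Injective (flp j) := by
  intro x y h
  have := congrArg (flp j) h
  simpa using this

lemma flp_bijective (j : Fin n) : Function.Bijective (flp j) :=
  Function.Involutive.bijective (fun x => flp_flp j x)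

lemma hammingDist_eq_card (x y : Fin n → Bool) :
    hammingDist x y = (Finset.univ.filter fun t => x t ≠ y t).card := rfl

lemma dist_one_iff {x y : Fin n → Bool} :
    hammingDist x y = 1 ↔ ∃ j, y = flp j x := by
  constructor
  · intro h
    rw [hammingDist_eq_card, Finset.card_eq_one] at h
    obtain ⟨j, hj⟩ := h
    refine ⟨j, funext fun t => ?_⟩
    by_cases ht : t = j
    · subst ht
      have : t ∈ Finset.univ.filter fun t => x t ≠ y t := by rw [hj]; simp
      simp only [Finset.mem_filter] at this
      rcases this with ⟨-, hne⟩
      cases hx : x t <;> cases hy : y t <;> simp_all [flp_apply]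
    · have : t ∉ Finset.univ.filter fun t => x t ≠ y t := by rw [hj]; simp [ht]
      simp only [Finset.mem_filter, Finset.mem_univ, true_and, not_not] at this
      simp [flp_apply, ht, this]
  · rintro ⟨j, rfl⟩
    rw [hammingDist_eq_card]
    have : (Finset.univ.filter fun t => x t ≠ flp j x t) = {j} := by
      ext t
      by_cases ht : t = j <;> simp [flp_apply, ht]
    rw [this, Finset.card_singleton]

/-! weight under flips -/

lemma weight_flp_true {j : Fin n} {x} (h : x j = true) :
    cubeWeight x = cubeWeight (flp j x) + 1 := by
  have hset : (Finset.univ.filter fun i => x i = true)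
      = insert j (Finset.univ.filter fun i => flp j x i = true) := by
    ext t
    by_cases ht : t = j
    · subst ht; simp [flp_apply, h]
    · simp [flp_apply, ht]
  have hj : j ∉ (Finset.univ.filter fun i => flp j x i = true) := by simp [flp_apply, h]
  rw [cubeWeight, cubeWeight, hset, Finset.card_insert_of_notMem hj]

lemma weight_flp_false {j : Fin n} {x} (h : x j = false) :
    cubeWeight (flp j x) = cubeWeight x + 1 := by
  have h2 : (flp j x) j = true := by simp [flp_apply, h]
  have := weight_flp_true (x := flp j x) (j := j) h2
  simpa using this

lemma weight_flp2_ff {j k : Fin n} {x} (hjk : k ≠ j) (hj : x j = false) (hk : x k = false) :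
    cubeWeight (flp k (flp j x)) = cubeWeight x + 2 := by
  have h1 : cubeWeight (flp j x) = cubeWeight x + 1 := weight_flp_false hj
  have h2 : (flp j x) k = false := by simp [flp_apply, hjk, hk]
  have := weight_flp_false (x := flp j x) (j := k) h2
  omega

lemma weight_flp2_tt {j k : Fin n} {x} (hjk : k ≠ j) (hj : x j = true) (hk : x k = true) :
    cubeWeight x = cubeWeight (flp k (flp j x)) + 2 := by
  have h1 : cubeWeight x = cubeWeight (flp j x) + 1 := weight_flp_true hj
  have h2 : (flp j x) k = true := by simp [flp_apply, hjk, hk]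
  have := weight_flp_true (x := flp j x) (j := k) h2
  omega

/-! the standard embedding determined by a base point and three distinct directions -/

def emb3 (a : Fin n → Bool) (j k l : Fin n) : (Fin 3 → Bool) → (Fin n → Bool) :=
  fun x t => if t = j then xor (x 0) (a t)
    else if t = k then xor (x 1) (a t)
    else if t = l then xor (x 2) (a t) else a t

lemma bxor_ne {b b' c : Bool} : xor b c ≠ xor b' c ↔ b ≠ b' := by
  cases b <;> cases b' <;> cases c <;> decide

lemma emb3_at_j (a : Fin n → Bool) (j k l : Fin n) (x) :
    emb3 a j k l x j = xor (x 0) (a j) := if_pos rfl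

lemma emb3_at_k (a : Fin n → Bool) {j k : Fin n} (l : Fin n) (h : k ≠ j) (x) :
    emb3 a j k l x k = xor (x 1) (a k) := by
  simp [emb3, h]

lemma emb3_at_l (a : Fin n → Bool) {j k l : Fin n} (h1 : l ≠ j) (h2 : l ≠ k) (x) :
    emb3 a j k l x l = xor (x 2) (a l) := by
  simp [emb3, h1, h2]

lemma emb3_at_other (a : Fin n → Bool) {j k l t : Fin n}
    (h1 : t ≠ j) (h2 : t ≠ k) (h3 : t ≠ l) (x) :
    emb3 a j k l x t = a t := by
  simp [emb3, h1, h2, h3]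

lemma emb3_dist (a : Fin n → Bool) {j k l : Fin n}
    (hjk : j ≠ k) (hjl : j ≠ l) (hkl : k ≠ l) (x y : Fin 3 → Bool) :
    hammingDist (emb3 a j k l x) (emb3 a j k l y) = hammingDist x y := by
  have himg : (Finset.univ.filter fun t => emb3 a j k l x t ≠ emb3 a j k l y t)
      = (Finset.univ.filter fun s : Fin 3 => x s ≠ y s).image ![j, k, l] := by
    ext t
    simp only [Finset.mem_filter, Finset.mem_univ, true_and, Finset.mem_image]
    by_cases h1 : t = j
    · subst h1
      rw [emb3_at_j, emb3_at_j, bxor_ne]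
      constructor
      · intro h; exact ⟨0, h, rfl⟩
      · rintro ⟨s, hs, hst⟩
        fin_cases s <;> simp_all
    · by_cases h2 : t = k
      · subst h2
        rw [emb3_at_k a l h1, emb3_at_k a l h1, bxor_ne]
        constructor
        · intro h; exact ⟨1, h, rfl⟩
        · rintro ⟨s, hs, hst⟩
          fin_cases s <;> simp_all
      · by_cases h3 : t = l
        · subst h3
          rw [emb3_at_l a h1 h2, emb3_at_l a h1 h2, bxor_ne]
          constructor
          · intro h; exact ⟨2, h, rfl⟩
          · rintro ⟨s, hs, hst⟩
            fin_cases s <;> simp_all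
        · rw [emb3_at_other a h1 h2 h3, emb3_at_other a h1 h2 h3]
          simp only [ne_eq, not_true_eq_false, false_iff, not_exists, not_and]
          intro s hs hst
          fin_cases s <;> simp_all
  rw [show hammingDist (emb3 a j k l x) (emb3 a j k l y)
      = (Finset.univ.filter fun t => emb3 a j k l x t ≠ emb3 a j k l y t).card from rfl, himg,
    Finset.card_image_of_injective _ ?_]
  · rfl
  · intro s1 s2 hs
    fin_cases s1 <;> fin_cases s2 <;> simp_all

lemma emb3_isEmb (a : Fin n → Bool) {j k l : Fin n}
    (hjk : j ≠ k) (hjl : j ≠ l) (hkl : k ≠ l) :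
    IsCubeEmbedding (emb3 a j k l) := by
  constructor
  · intro x y hxy
    by_contra hne
    have h0 : hammingDist x y ≠ 0 := by
      simpa [hammingDist_eq_zero] using hne
    have := emb3_dist a hjk hjl hkl x y
    rw [hxy, hammingDist_self] at this
    exact h0 this.symm
  · intro x y h
    rw [emb3_dist a hjk hjl hkl, h]

section images
variable (a : Fin n → Bool) {j k l : Fin n}
  (hjk : j ≠ k) (hjl : j ≠ l) (hkl : k ≠ l)

lemma emb3_000 : emb3 a j k l ![false, false, false] = a := by
  funext t
  by_cases h1 : t = j <;> by_cases h2 : t = k <;> by_cases h3 : t = l <;>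
    simp_all [emb3]

include hjk hjl in
lemma emb3_100 : emb3 a j k l ![true, false, false] = flp j a := by
  funext t
  by_cases h1 : t = j <;> by_cases h2 : t = k <;> by_cases h3 : t = l <;>
    simp_all [emb3, flp_apply]

include hjk hkl in
lemma emb3_010 : emb3 a j k l ![false, true, false] = flp k a := by
  funext t
  by_cases h1 : t = j <;> by_cases h2 : t = k <;> by_cases h3 : t = l <;>
    simp_all [emb3, flp_apply]

include hjl hkl in
lemma emb3_001 : emb3 a j k l ![false, false, true] = flp l a := by
  funext t
  by_cases h1 : t = j <;> by_cases h2 : t = k <;> by_cases h3 : t = l <;>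
    simp_all [emb3, flp_apply]

include hjk hjl hkl in
lemma emb3_110 : emb3 a j k l ![true, true, false] = flp k (flp j a) := by
  funext t
  by_cases h1 : t = j <;> by_cases h2 : t = k <;> by_cases h3 : t = l <;>
    simp_all [emb3, flp_apply]

include hjk hjl hkl in
lemma emb3_101 : emb3 a j k l ![true, false, true] = flp l (flp j a) := by
  funext t
  by_cases h1 : t = j <;> by_cases h2 : t = k <;> by_cases h3 : t = l <;>
    simp_all [emb3, flp_apply]

include hjk hjl hkl in
lemma emb3_011 : emb3 a j k l ![false, true, true] = flp l (flp k a) := by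
  funext t
  by_cases h1 : t = j <;> by_cases h2 : t = k <;> by_cases h3 : t = l <;>
    simp_all [emb3, flp_apply]

end images

/-! rigidity: four-cycles in the cube -/

lemma flp_eq_flp {A : Fin n → Bool} {p j q k : Fin n} (hjk : j ≠ k)
    (hne : flp p (flp j A) ≠ A) (heq : flp p (flp j A) = flp q (flp k A)) :
    p = k ∧ q = j := by
  have hpj : p ≠ j := fun h => hne (h ▸ flp_flp j A)
  have hqk : q ≠ k := by
    intro h; rw [heq, h] at hne; exact hne (flp_flp k A)
  constructor
  · by_contra hp
    have hk := congrFun heq k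
    simp only [flp_apply, if_neg (Ne.symm hjk), if_neg (Ne.symm hqk), if_pos rfl,
      if_neg (show k ≠ p from fun h => hp h.symm)] at hk
    simp at hk
  · by_contra hq
    have hj := congrFun heq j
    simp only [flp_apply, if_neg (Ne.symm hpj), if_neg hjk, if_pos rfl,
      if_neg (show j ≠ q from fun h => hq h.symm)] at hj
    simp at hj

end LF

namespace LF

variable {n : ℕ}

/-- structure of an arbitrary embedding of `Q₃`, on the seven points we care about -/
lemma exists_structure {i : (Fin 3 → Bool) → (Fin n → Bool)} (hi : IsCubeEmbedding i) :
    ∃ (j k l : Fin n), j ≠ k ∧ j ≠ l ∧ k ≠ l ∧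
      i ![true, false, false] = flp j (i ![false, false, false]) ∧
      i ![false, true, false] = flp k (i ![false, false, false]) ∧
      i ![false, false, true] = flp l (i ![false, false, false]) ∧
      i ![true, true, false] = flp k (flp j (i ![false, false, false])) ∧
      i ![true, false, true] = flp l (flp j (i ![false, false, false])) ∧
      i ![false, true, true] = flp l (flp k (i ![false, false, false])) := by
  obtain ⟨hinj, hdist⟩ := hi
  obtain ⟨j, hj⟩ := dist_one_iff.mp
    (hdist ![false, false, false] ![true, false, false] (by decide))
  obtain ⟨k, hk⟩ := dist_one_iff.mp
    (hdist ![false, false, false] ![false, true, false] (by decide))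
  obtain ⟨l, hl⟩ := dist_one_iff.mp
    (hdist ![false, false, false] ![false, false, true] (by decide))
  have hjk : j ≠ k := by
    rintro rfl
    exact (by decide : ¬(![true, false, false] : Fin 3 → Bool) = ![false, true, false])
      (hinj (hj.trans hk.symm))
  have hjl : j ≠ l := by
    rintro rfl
    exact (by decide : ¬(![true, false, false] : Fin 3 → Bool) = ![false, false, true])
      (hinj (hj.trans hl.symm))
  have hkl : k ≠ l := by
    rintro rfl
    exact (by decide : ¬(![false, true, false] : Fin 3 → Bool) = ![false, false, true])
      (hinj (hk.trans hl.symm))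
  -- the four-cycle through 000, 100, 010, 110
  obtain ⟨p, hp⟩ := dist_one_iff.mp
    (hdist ![true, false, false] ![true, true, false] (by decide))
  obtain ⟨q, hq⟩ := dist_one_iff.mp
    (hdist ![false, true, false] ![true, true, false] (by decide))
  rw [hj] at hp; rw [hk] at hq
  have h110 := flp_eq_flp hjk
    (by rw [← hp]
        intro hcon
        exact (by decide : ¬(![true, true, false] : Fin 3 → Bool) = ![false, false, false])
          (hinj hcon))
    (hp.symm.trans hq)
  -- the four-cycle through 000, 100, 001, 101
  obtain ⟨p2, hp2⟩ := dist_one_iff.mp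
    (hdist ![true, false, false] ![true, false, true] (by decide))
  obtain ⟨q2, hq2⟩ := dist_one_iff.mp
    (hdist ![false, false, true] ![true, false, true] (by decide))
  rw [hj] at hp2; rw [hl] at hq2
  have h101 := flp_eq_flp hjl
    (by rw [← hp2]
        intro hcon
        exact (by decide : ¬(![true, false, true] : Fin 3 → Bool) = ![false, false, false])
          (hinj hcon))
    (hp2.symm.trans hq2)
  -- the four-cycle through 000, 010, 001, 011
  obtain ⟨p3, hp3⟩ := dist_one_iff.mp
    (hdist ![false, true, false] ![false, true, true] (by decide))
  obtain ⟨q3, hq3⟩ := dist_one_iff.mp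
    (hdist ![false, false, true] ![false, true, true] (by decide))
  rw [hk] at hp3; rw [hl] at hq3
  have h011 := flp_eq_flp hkl
    (by rw [← hp3]
        intro hcon
        exact (by decide : ¬(![false, true, true] : Fin 3 → Bool) = ![false, false, false])
          (hinj hcon))
    (hp3.symm.trans hq3)
  exact ⟨j, k, l, hjk, hjl, hkl, hj, hk, hl,
    by rw [hp, h110.1], by rw [hp2, h101.1], by rw [hp3, h011.1]⟩

/-! ### freeness of weight classes -/

lemma mem_image_of_F1 {i : (Fin 3 → Bool) → (Fin n → Bool)} (pt : Fin 3 → Bool)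
    (hpt : pt ∈ F1) : i pt ∈ i '' F1 := ⟨pt, hpt, rfl⟩

lemma isFree_F1_filter (f : ℕ → Prop) [DecidablePred f]
    (hf : ∀ w, f w → f (w + 1) → False) :
    IsFree F1 (↑(Finset.univ.filter fun x : Fin n → Bool => f (cubeWeight x)) :
      Set (Fin n → Bool)) := by
  intro i hi hsub
  have hA := hsub (mem_image_of_F1 ![false, false, false] (by left; rfl))
  have hB := hsub (mem_image_of_F1 ![true, false, false] (by right; left; rfl))
  rw [Finset.mem_coe, Finset.mem_filter] at hA hB
  obtain ⟨j, hj⟩ := dist_one_iff.mp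
    (hi.2 ![false, false, false] ![true, false, false] (by decide))
  rw [hj] at hB
  set A := i ![false, false, false]
  cases hAj : A j
  · have := weight_flp_false (x := A) (j := j) hAj
    exact hf _ hA.2 (this ▸ hB.2)
  · have := weight_flp_true (x := A) (j := j) hAj
    exact hf _ hB.2 (this ▸ hA.2)

lemma isFree_F2_filter (f : ℕ → Prop) [DecidablePred f]
    (hf : ∀ w, f w → f (w + 2) → False) :
    IsFree F2 (↑(Finset.univ.filter fun x : Fin n → Bool => f (cubeWeight x)) :
      Set (Fin n → Bool)) := by
  intro i hi hsub
  obtain ⟨j, k, l, hjk, hjl, hkl, -, -, -, h110, h101, h011⟩ := exists_structure hi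
  have hA := hsub ⟨![false, false, false], by left; rfl, rfl⟩
  have hB := hsub ⟨![true, true, false], by right; left; rfl, rfl⟩
  have hC := hsub ⟨![true, false, true], by right; right; left; rfl, rfl⟩
  have hD := hsub ⟨![false, true, true], by right; right; right; rfl, rfl⟩
  rw [Finset.mem_coe, Finset.mem_filter] at hA hB hC hD
  rw [h110] at hB; rw [h101] at hC; rw [h011] at hD
  set A := i ![false, false, false]
  have mixed : ∀ p q : Fin n, q ≠ p → f (cubeWeight (flp q (flp p A))) → A p ≠ A q := by
    intro p q hqp hw heq
    cases hval : A p
    · rw [hval] at heq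
      have := weight_flp2_ff hqp hval heq.symm
      exact hf _ hA.2 (this ▸ hw)
    · rw [hval] at heq
      have := weight_flp2_tt hqp hval heq.symm
      exact hf _ hw (this ▸ hA.2)
  have m1 : A j ≠ A k := mixed j k (Ne.symm hjk) hB.2
  have m2 : A j ≠ A l := mixed j l (Ne.symm hjl) hC.2
  have m3 : A k ≠ A l := mixed k l (Ne.symm hkl) hD.2
  cases h1 : A j <;> cases h2 : A k <;> cases h3 : A l <;> simp_all

end LF

namespace LF

variable {n : ℕ}

lemma card_univ_cube : (Finset.univ : Finset (Fin n → Bool)).card = 2 ^ n := by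
  rw [Finset.card_univ]
  simp

lemma bddAbove_exc2_set :
    BddAbove {k : ℕ | ∃ S : Finset (Fin n → Bool),
      IsFree F1 (S : Set (Fin n → Bool)) ∧ IsFree F2 (S : Set (Fin n → Bool)) ∧ S.card = k} := by
  refine ⟨2 ^ n, ?_⟩
  rintro k ⟨S, -, -, rfl⟩
  calc S.card ≤ (Finset.univ : Finset (Fin n → Bool)).card := Finset.card_le_card (by simp)
    _ = 2 ^ n := card_univ_cube

lemma bddAbove_exc_set (F : Set (Fin 3 → Bool)) :
    BddAbove {k : ℕ | ∃ S : Finset (Fin n → Bool),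
      IsFree F (S : Set (Fin n → Bool)) ∧ S.card = k} := by
  refine ⟨2 ^ n, ?_⟩
  rintro k ⟨S, -, rfl⟩
  calc S.card ≤ (Finset.univ : Finset (Fin n → Bool)).card := Finset.card_le_card (by simp)
    _ = 2 ^ n := card_univ_cube

lemma le_exc2 (S : Finset (Fin n → Bool)) (h1 : IsFree F1 (S : Set (Fin n → Bool)))
    (h2 : IsFree F2 (S : Set (Fin n → Bool))) : S.card ≤ exc2 n F1 F2 :=
  le_csSup bddAbove_exc2_set ⟨S, h1, h2, rfl⟩

lemma le_exc (F : Set (Fin 3 → Bool)) (S : Finset (Fin n → Bool))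
    (h : IsFree F (S : Set (Fin n → Bool))) : S.card ≤ exc n F :=
  le_csSup (bddAbove_exc_set F) ⟨S, h, rfl⟩

lemma empty_free (F : Set (Fin 3 → Bool)) (hF : F.Nonempty) :
    IsFree F ((↑(∅ : Finset (Fin n → Bool))) : Set (Fin n → Bool)) := by
  intro i hi hsub
  obtain ⟨pt, hpt⟩ := hF
  have := hsub ⟨pt, hpt, rfl⟩
  simp at this

lemma exc2_le (B : ℕ)
    (h : ∀ S : Finset (Fin n → Bool), IsFree F1 (S : Set (Fin n → Bool)) →
      IsFree F2 (S : Set (Fin n → Bool)) → S.card ≤ B) :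
    exc2 n F1 F2 ≤ B := by
  apply csSup_le
  · exact ⟨0, ∅, empty_free F1 ⟨_, by left; rfl⟩, empty_free F2 ⟨_, by left; rfl⟩,
      Finset.card_empty⟩
  · rintro k ⟨S, h1, h2, rfl⟩
    exact h S h1 h2

/-- main lower bound : a largest weight class mod 3 -/
lemma exc2_lower : 2 ^ n ≤ 3 * exc2 n F1 F2 := by
  have hcard : ∑ r ∈ Finset.range 3,
      (Finset.univ.filter fun x : Fin n → Bool => cubeWeight x % 3 = r).card = 2 ^ n := by
    rw [← Finset.card_eq_sum_card_fiberwise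
      (fun x _ => Finset.mem_range.mpr (Nat.mod_lt _ (by norm_num)))]
    exact card_univ_cube
  rw [Finset.sum_range_succ, Finset.sum_range_succ, Finset.sum_range_one] at hcard
  have key : ∀ r : ℕ,
      (Finset.univ.filter fun x : Fin n → Bool => cubeWeight x % 3 = r).card ≤ exc2 n F1 F2 := by
    intro r
    apply le_exc2
    · exact isFree_F1_filter (fun w => w % 3 = r) (fun w h1 h2 => by omega)
    · exact isFree_F2_filter (fun w => w % 3 = r) (fun w h1 h2 => by omega)
  have k0 := key 0; have k1 := key 1; have k2 := key 2
  omega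

/-- lower bound for `exc n F1` : even-weight class -/
lemma exc_F1_lower : 2 ^ n ≤ 2 * exc n F1 := by
  have hsplit := Finset.card_filter_add_card_filter_not
    (s := (Finset.univ : Finset (Fin n → Bool))) (p := fun x => cubeWeight x % 2 = 0)
  rw [card_univ_cube] at hsplit
  have k0 : (Finset.univ.filter fun x : Fin n → Bool => cubeWeight x % 2 = 0).card ≤ exc n F1 :=
    le_exc F1 _ (isFree_F1_filter (fun w => w % 2 = 0) (fun w h1 h2 => by omega))
  have k1 : (Finset.univ.filter fun x : Fin n → Bool => ¬(cubeWeight x % 2 = 0)).card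
      ≤ exc n F1 :=
    le_exc F1 _ (isFree_F1_filter (fun w => ¬(w % 2 = 0)) (fun w h1 h2 => by omega))
  omega

/-- lower bound for `exc n F2` : classes of `⌊w/2⌋ mod 2` -/
lemma exc_F2_lower : 2 ^ n ≤ 2 * exc n F2 := by
  have hsplit := Finset.card_filter_add_card_filter_not
    (s := (Finset.univ : Finset (Fin n → Bool))) (p := fun x => cubeWeight x % 4 ≤ 1)
  rw [card_univ_cube] at hsplit
  have k0 : (Finset.univ.filter fun x : Fin n → Bool => cubeWeight x % 4 ≤ 1).card ≤ exc n F2 :=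
    le_exc F2 _ (isFree_F2_filter (fun w => w % 4 ≤ 1) (fun w h1 h2 => by omega))
  have k1 : (Finset.univ.filter fun x : Fin n → Bool => ¬(cubeWeight x % 4 ≤ 1)).card
      ≤ exc n F2 :=
    le_exc F2 _ (isFree_F2_filter (fun w => ¬(w % 4 ≤ 1)) (fun w h1 h2 => by omega))
  omega

end LF

namespace LF

variable {n : ℕ}

/-- number of neighbours of `m` inside `S` -/
def deg (S : Finset (Fin n → Bool)) (m : Fin n → Bool) : ℕ :=
  (Finset.univ.filter fun j => flp j m ∈ S).card

/-- number of `S`-points at distance two from `a` through first direction `j` -/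
def Dg (S : Finset (Fin n → Bool)) (a : Fin n → Bool) (j : Fin n) : ℕ :=
  (Finset.univ.filter fun k => k ≠ j ∧ flp k (flp j a) ∈ S).card

def Ea (S : Finset (Fin n → Bool)) (a : Fin n → Bool) : ℕ := ∑ j, Dg S a j

variable (S : Finset (Fin n → Bool))

lemma deg_le (m : Fin n → Bool) : deg S m ≤ n := by
  calc deg S m ≤ (Finset.univ : Finset (Fin n)).card := Finset.card_le_card (by simp)
    _ = n := by simp

lemma sum_ind (j : Fin n) :
    ∑ m : Fin n → Bool, (if flp j m ∈ S then 1 else 0) = S.card := by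
  rw [Fintype.sum_bijective (flp j) (flp_bijective j) _
    (fun m => if m ∈ S then 1 else 0) (fun m => rfl)]
  simp [Finset.sum_ite_mem]

lemma sum_deg : ∑ m : Fin n → Bool, deg S m = n * S.card := by
  unfold deg
  simp only [Finset.card_filter]
  rw [Finset.sum_comm]
  simp [sum_ind S]

lemma deg_le_two (hfree : IsFree F1 (S : Set (Fin n → Bool))) {a : Fin n → Bool}
    (ha : a ∈ S) : deg S a ≤ 2 := by
  by_contra hcon
  obtain ⟨t, hts, htc⟩ := Finset.exists_subset_card_eq (show 3 ≤ deg S a by omega)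
  obtain ⟨j, k, l, hjk, hjl, hkl, rfl⟩ := Finset.card_eq_three.mp htc
  have hj : flp j a ∈ S := by
    have := hts (by simp : j ∈ ({j, k, l} : Finset (Fin n)))
    simpa using (Finset.mem_filter.mp this).2
  have hk : flp k a ∈ S := by
    have := hts (by simp : k ∈ ({j, k, l} : Finset (Fin n)))
    simpa using (Finset.mem_filter.mp this).2
  have hl : flp l a ∈ S := by
    have := hts (by simp : l ∈ ({j, k, l} : Finset (Fin n)))
    simpa using (Finset.mem_filter.mp this).2
  apply hfree (emb3 a j k l) (emb3_isEmb a hjk hjl hkl)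
  rintro y ⟨pt, hpt, rfl⟩
  simp only [F1, Set.mem_insert_iff, Set.mem_singleton_iff] at hpt
  rcases hpt with rfl | rfl | rfl | rfl
  · rw [emb3_000]; exact ha
  · rw [emb3_100 a hjk hjl]; exact hj
  · rw [emb3_010 a hjk hkl]; exact hk
  · rw [emb3_001 a hjl hkl]; exact hl

lemma no_triangle (hfree : IsFree F2 (S : Set (Fin n → Bool))) {a : Fin n → Bool}
    (ha : a ∈ S) {j k l : Fin n} (hjk : j ≠ k) (hjl : j ≠ l) (hkl : k ≠ l)
    (h1 : flp k (flp j a) ∈ S) (h2 : flp l (flp j a) ∈ S) (h3 : flp l (flp k a) ∈ S) :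
    False := by
  apply hfree (emb3 a j k l) (emb3_isEmb a hjk hjl hkl)
  rintro y ⟨pt, hpt, rfl⟩
  simp only [F2, Set.mem_insert_iff, Set.mem_singleton_iff] at hpt
  rcases hpt with rfl | rfl | rfl | rfl
  · rw [emb3_000]; exact ha
  · rw [emb3_110 a hjk hjl hkl]; exact h1
  · rw [emb3_101 a hjk hjl hkl]; exact h2
  · rw [emb3_011 a hjk hjl hkl]; exact h3

end LF

namespace LF

variable {n : ℕ} (S : Finset (Fin n → Bool))

lemma Dg_symm_cond (a : Fin n → Bool) (j k : Fin n) :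
    (k ≠ j ∧ flp k (flp j a) ∈ S) ↔ (j ≠ k ∧ flp j (flp k a) ∈ S) := by
  rw [flp_comm]; exact ⟨fun ⟨h1, h2⟩ => ⟨h1.symm, h2⟩, fun ⟨h1, h2⟩ => ⟨h1.symm, h2⟩⟩

lemma mantel_deg_add (hfree : IsFree F2 (S : Set (Fin n → Bool))) {a : Fin n → Bool}
    (ha : a ∈ S) {j k : Fin n} (hkj : k ≠ j) (hS : flp k (flp j a) ∈ S) :
    Dg S a j + Dg S a k ≤ n := by
  have hdisj : Disjoint (Finset.univ.filter fun l => l ≠ j ∧ flp l (flp j a) ∈ S)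
      (Finset.univ.filter fun l => l ≠ k ∧ flp l (flp k a) ∈ S) := by
    rw [Finset.disjoint_left]
    intro l hl1 hl2
    simp only [Finset.mem_filter, Finset.mem_univ, true_and] at hl1 hl2
    exact no_triangle S hfree ha (Ne.symm hkj) (Ne.symm hl1.1) (Ne.symm hl2.1)
      hS hl1.2 hl2.2
  calc Dg S a j + Dg S a k
      = ((Finset.univ.filter fun l => l ≠ j ∧ flp l (flp j a) ∈ S)
        ∪ (Finset.univ.filter fun l => l ≠ k ∧ flp l (flp k a) ∈ S)).card :=
        (Finset.card_union_of_disjoint hdisj).symm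
    _ ≤ (Finset.univ : Finset (Fin n)).card := Finset.card_le_card (by simp)
    _ = n := by simp

lemma mantel_sum_sq (hfree : IsFree F2 (S : Set (Fin n → Bool))) {a : Fin n → Bool}
    (ha : a ∈ S) :
    2 * ∑ j, (Dg S a j) ^ 2 ≤ n * Ea S a := by
  have key : ∑ j, ∑ k ∈ Finset.univ.filter (fun k => k ≠ j ∧ flp k (flp j a) ∈ S),
      (Dg S a j + Dg S a k) ≤ ∑ j, ∑ _k ∈ Finset.univ.filter
        (fun k => k ≠ j ∧ flp k (flp j a) ∈ S), n := by
    refine Finset.sum_le_sum fun j _ => Finset.sum_le_sum fun k hk => ?_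
    simp only [Finset.mem_filter, Finset.mem_univ, true_and] at hk
    exact mantel_deg_add S hfree ha hk.1 hk.2
  have hrhs : ∑ j, ∑ _k ∈ Finset.univ.filter
      (fun k => k ≠ j ∧ flp k (flp j a) ∈ S), (n : ℕ) = n * Ea S a := by
    simp only [Finset.sum_const, smul_eq_mul]
    rw [Ea, ← Finset.sum_mul, mul_comm]
    rfl
  have hlhs : ∑ j, ∑ k ∈ Finset.univ.filter (fun k => k ≠ j ∧ flp k (flp j a) ∈ S),
      (Dg S a j + Dg S a k) = 2 * ∑ j, (Dg S a j) ^ 2 := by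
    have h1 : ∀ j, ∑ k ∈ Finset.univ.filter (fun k => k ≠ j ∧ flp k (flp j a) ∈ S),
        (Dg S a j + Dg S a k)
        = (Dg S a j) ^ 2 + ∑ k ∈ Finset.univ.filter
            (fun k => k ≠ j ∧ flp k (flp j a) ∈ S), Dg S a k := by
      intro j
      rw [Finset.sum_add_distrib, Finset.sum_const, smul_eq_mul, sq]
      rfl
    simp only [h1]
    rw [Finset.sum_add_distrib, two_mul]
    congr 1
    -- swap the double sum
    have h2 : ∑ j, ∑ k ∈ Finset.univ.filter (fun k => k ≠ j ∧ flp k (flp j a) ∈ S),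
        Dg S a k
        = ∑ k : Fin n, ∑ j : Fin n,
            (if k ≠ j ∧ flp k (flp j a) ∈ S then Dg S a k else 0) := by
      simp_rw [Finset.sum_filter]
      exact Finset.sum_comm
    rw [h2]
    refine Finset.sum_congr rfl fun k _ => ?_
    have h3 : ∀ j, (if k ≠ j ∧ flp k (flp j a) ∈ S then Dg S a k else 0)
        = (if j ≠ k ∧ flp j (flp k a) ∈ S then Dg S a k else 0) := by
      intro j
      congr 1
      · exact propext (Dg_symm_cond S a j k)
    simp_rw [h3]
    rw [← Finset.sum_filter, Finset.sum_const, smul_eq_mul, sq]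
    rfl
  omega

/-- Mantel's bound: triangle-free link has at most `n²/2` ordered edges. -/
lemma mantel (hfree : IsFree F2 (S : Set (Fin n → Bool))) {a : Fin n → Bool}
    (ha : a ∈ S) : 2 * Ea S a ≤ n ^ 2 := by
  rcases Nat.eq_zero_or_pos (Ea S a) with h0 | hpos
  · rw [h0]; positivity
  have hcs : ((Ea S a : ℝ)) ^ 2 ≤ (n : ℝ) * ∑ j, ((Dg S a j : ℝ)) ^ 2 := by
    have := sq_sum_le_card_mul_sum_sq (s := (Finset.univ : Finset (Fin n)))
      (f := fun j => (Dg S a j : ℝ))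
    simpa [Ea, Nat.cast_sum] using this
  have hm : (2 : ℝ) * ∑ j, ((Dg S a j : ℝ)) ^ 2 ≤ (n : ℝ) * Ea S a := by
    exact_mod_cast mantel_sum_sq S hfree ha
  have hfin : (2 : ℝ) * (Ea S a) ^ 2 ≤ (n : ℝ) ^ 2 * Ea S a := by nlinarith
  have hpos' : (0 : ℝ) < Ea S a := by exact_mod_cast hpos
  have : (2 : ℝ) * Ea S a ≤ (n : ℝ) ^ 2 := by
    have := mul_le_mul_of_nonneg_right (le_refl (1 : ℝ)) (le_of_lt hpos')
    nlinarith
  exact_mod_cast this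

end LF

namespace LF

variable {n : ℕ} (S : Finset (Fin n → Bool))

lemma pair_count (j k : Fin n) :
    ∑ m : Fin n → Bool, (if flp j m ∈ S then 1 else 0) * (if flp k m ∈ S then 1 else 0)
    = (S.filter fun a => flp k (flp j a) ∈ S).card := by
  rw [Fintype.sum_bijective (flp j) (flp_bijective j) _
    (fun a => (if a ∈ S then 1 else 0) * (if flp k (flp j a) ∈ S then (1 : ℕ) else 0))
    (fun m => by simp only [flp_flp])]
  rw [Finset.card_filter]
  simp_rw [ite_mul, one_mul, zero_mul]
  rw [Finset.sum_ite_mem, Finset.univ_inter]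

lemma diag_count (j : Fin n) :
    ∑ m : Fin n → Bool, (if flp j m ∈ S then 1 else 0) * (if flp j m ∈ S then 1 else 0)
    = S.card := by
  have : ∀ m : Fin n → Bool, (if flp j m ∈ S then (1:ℕ) else 0) * (if flp j m ∈ S then 1 else 0)
      = (if flp j m ∈ S then 1 else 0) := by
    intro m; split <;> simp
  simp_rw [this]
  exact sum_ind S j

lemma sum_deg_sq :
    ∑ m : Fin n → Bool, (deg S m) ^ 2
      = (∑ a ∈ S, Ea S a) + ∑ m : Fin n → Bool, deg S m := by
  have hdeg : ∀ m, deg S m = ∑ j, (if flp j m ∈ S then 1 else 0) := fun m =>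
    Finset.card_filter _ _
  have e1 : ∑ m : Fin n → Bool, (deg S m) ^ 2
      = ∑ j : Fin n, ∑ k : Fin n, ∑ m : Fin n → Bool,
          (if flp j m ∈ S then 1 else 0) * (if flp k m ∈ S then 1 else 0) := by
    simp_rw [hdeg, sq, Finset.sum_mul_sum]
    rw [Finset.sum_comm]
    refine Finset.sum_congr rfl fun j _ => Finset.sum_comm
  have e2 : ∀ j : Fin n, ∑ k : Fin n, ∑ m : Fin n → Bool,
      (if flp j m ∈ S then 1 else 0) * (if flp k m ∈ S then 1 else 0)
      = S.card + ∑ k ∈ Finset.univ.erase j, (S.filter fun a => flp k (flp j a) ∈ S).card := by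
    intro j
    rw [← Finset.add_sum_erase _ _ (Finset.mem_univ j), diag_count]
    congr 1
    exact Finset.sum_congr rfl fun k _ => pair_count S j k
  have e3 : ∑ a ∈ S, Ea S a
      = ∑ j : Fin n, ∑ k ∈ Finset.univ.erase j,
          (S.filter fun a => flp k (flp j a) ∈ S).card := by
    have hEa : ∀ a, Ea S a = ∑ j : Fin n, ∑ k : Fin n,
        (if k ≠ j ∧ flp k (flp j a) ∈ S then 1 else 0) := by
      intro a
      rw [Ea]
      exact Finset.sum_congr rfl fun j _ => Finset.card_filter _ _
    simp_rw [hEa]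
    rw [Finset.sum_comm]
    refine Finset.sum_congr rfl fun j _ => ?_
    rw [Finset.sum_comm]
    rw [← Finset.add_sum_erase _
      (fun k => ∑ a ∈ S, if k ≠ j ∧ flp k (flp j a) ∈ S then 1 else 0)
      (Finset.mem_univ j)]
    have hj0 : ∑ a ∈ S, (if j ≠ j ∧ flp j (flp j a) ∈ S then (1:ℕ) else 0) = 0 := by
      simp
    rw [hj0, zero_add]
    refine Finset.sum_congr rfl fun k hk => ?_
    have hkj : k ≠ j := (Finset.mem_erase.mp hk).1
    rw [Finset.card_filter]
    refine Finset.sum_congr rfl fun a _ => ?_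
    simp [hkj]
  rw [e1, e3, sum_deg]
  simp_rw [e2]
  rw [Finset.sum_add_distrib, Finset.sum_const, Finset.card_univ]
  simp [mul_comm, Nat.add_comm]

lemma sum_deg_sq_le (hfree2 : IsFree F2 (S : Set (Fin n → Bool))) :
    2 * ∑ m : Fin n → Bool, (deg S m) ^ 2 ≤ S.card * n ^ 2 + 2 * (n * S.card) := by
  have h1 := sum_deg_sq S
  have h2 : 2 * ∑ a ∈ S, Ea S a ≤ S.card * n ^ 2 := by
    rw [Finset.mul_sum]
    calc ∑ a ∈ S, 2 * Ea S a ≤ ∑ _a ∈ S, n ^ 2 :=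
      Finset.sum_le_sum fun a ha => mantel S hfree2 ha
    _ = S.card * n ^ 2 := by rw [Finset.sum_const, smul_eq_mul]
  have h3 := sum_deg S
  omega

end LF

namespace LF

/-! ### pure real-number algebra steps, isolated for speed -/

lemma algMAIN (nn N s t1 t2 T1 T2 X Q : ℝ)
    (hT1 : T1 = nn * s) (hT2le : 2 * T2 ≤ s * nn ^ 2 + 2 * T1)
    (ht1le : t1 ≤ 2 * s) (ht10 : 0 ≤ t1) (ht20 : 0 ≤ t2)
    (h2nn : 2 ≤ nn) (hs0 : 0 ≤ s)
    (hXeq : X = nn * (N - s) - (T1 - t1))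
    (hQeq : Q = nn ^ 2 * (N - s) - 2 * nn * (T1 - t1) + (T2 - t2)) :
    6 * nn * (nn - 1) * s + 2 * (Q - X)
      ≤ 2 * nn * (nn - 1) * N + 16 * (nn - 1) * s + s * nn ^ 2 := by
  rw [hXeq, hQeq, hT1]
  rw [hT1] at hT2le
  nlinarith [mul_nonneg (show (0:ℝ) ≤ 4 * nn - 2 by linarith)
      (show (0:ℝ) ≤ 2 * s - t1 by linarith),
    hT2le, ht20, mul_nonneg hs0 (show (0:ℝ) ≤ nn - 2 by linarith)]

lemma algHalf (nn N s X Q : ℝ)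
    (hMAIN : 6 * nn * (nn - 1) * s + 2 * (Q - X)
      ≤ 2 * nn * (nn - 1) * N + 16 * (nn - 1) * s + s * nn ^ 2)
    (hXQ : X ≤ Q) (h18 : 18 ≤ nn) (hs0 : 0 ≤ s) (hN0 : 0 < N) :
    2 * s ≤ N := by
  have hsq18 : 0 ≤ nn ^ 2 - 18 * nn + 16 := by nlinarith
  nlinarith [mul_nonneg hs0 hsq18]

lemma algKey (nn N s X Q : ℝ)
    (hMAIN : 6 * nn * (nn - 1) * s + 2 * (Q - X)
      ≤ 2 * nn * (nn - 1) * N + 16 * (nn - 1) * s + s * nn ^ 2)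
    (hsq : (nn * (N - 2 * s)) ^ 2 ≤ X ^ 2)
    (hCS : X ^ 2 ≤ (N - s) * Q)
    (hXup : X ≤ nn * (N - s))
    (hNs0 : 0 ≤ N - s) :
    2 * (nn * (N - 2 * s)) ^ 2
      ≤ (N - s) * (2 * nn * (nn - 1) * N + 16 * (nn - 1) * s + s * nn ^ 2
          - 6 * nn * (nn - 1) * s) + 2 * nn * (N - s) ^ 2 := by
  have h2 : (N - s) * (2 * Q) ≤ (N - s) * (2 * nn * (nn - 1) * N + 16 * (nn - 1) * s
      + s * nn ^ 2 - 6 * nn * (nn - 1) * s + 2 * X) :=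
    mul_le_mul_of_nonneg_left (by linarith) hNs0
  have h3 : (N - s) * (2 * X) ≤ (N - s) * (2 * (nn * (N - s))) :=
    mul_le_mul_of_nonneg_left (by linarith) hNs0
  nlinarith [hsq, hCS, h2, h3]

lemma algFinal (nn N s : ℝ) (h18 : 18 ≤ nn) (hs1 : 1 ≤ s) (hsN : s ≤ N)
    (hkey : 2 * (nn * (N - 2 * s)) ^ 2
      ≤ (N - s) * (2 * nn * (nn - 1) * N + 16 * (nn - 1) * s + s * nn ^ 2
          - 6 * nn * (nn - 1) * s) + 2 * nn * (N - s) ^ 2) :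
    3 * nn * s ≤ (nn + 20) * N := by
  have hP : 0 ≤ s * (nn ^ 2 * (N - 3 * s) + (20 * nn - 16) * (N - s)) := by
    have h := sub_nonneg.mpr hkey
    have hid : (N - s) * (2 * nn * (nn - 1) * N + 16 * (nn - 1) * s + s * nn ^ 2
          - 6 * nn * (nn - 1) * s) + 2 * nn * (N - s) ^ 2
          - 2 * (nn * (N - 2 * s)) ^ 2
        = s * (nn ^ 2 * (N - 3 * s) + (20 * nn - 16) * (N - s)) := by ring
    rw [hid] at h
    exact h
  have hE : 0 ≤ nn ^ 2 * (N - 3 * s) + (20 * nn - 16) * (N - s) := by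
    by_contra hcon
    push_neg at hcon
    have : s * (nn ^ 2 * (N - 3 * s) + (20 * nn - 16) * (N - s)) < 0 :=
      mul_neg_of_pos_of_neg (by linarith) hcon
    linarith
  have hb1 : (20 * nn - 16) * (N - s) ≤ 20 * nn * N := by nlinarith
  have hb2 : 3 * nn ^ 2 * s ≤ nn ^ 2 * N + 20 * nn * N := by nlinarith
  nlinarith [hb2, sq_nonneg nn]

end LF

namespace LF

variable {n : ℕ}

lemma nat_le_sq (x : ℕ) : (x : ℝ) ≤ (x : ℝ) ^ 2 := by
  have : x ≤ x ^ 2 := by nlinarith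
  exact_mod_cast this

set_option maxHeartbeats 1000000 in
theorem main_upper (hn : 18 ≤ n) (S : Finset (Fin n → Bool))
    (hf1 : IsFree F1 (S : Set (Fin n → Bool))) (hf2 : IsFree F2 (S : Set (Fin n → Bool))) :
    3 * n * S.card ≤ 2 ^ n * (n + 20) := by
  rcases Nat.eq_zero_or_pos S.card with hS0 | hSpos
  · rw [hS0]; simp
  have hsub : S ⊆ Finset.univ := Finset.subset_univ S
  have hcardle : S.card ≤ 2 ^ n := by
    rw [← card_univ_cube (n := n)]; exact Finset.card_le_card hsub
  -- real quantities
  set nn : ℝ := (n : ℝ) with hnn_def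
  set N : ℝ := ((2 ^ n : ℕ) : ℝ) with hN_def
  set s : ℝ := (S.card : ℝ) with hs_def
  set dR : (Fin n → Bool) → ℝ := fun m => (deg S m : ℝ) with hdR_def
  set T1 : ℝ := ∑ m : Fin n → Bool, dR m with hT1_def
  set T2 : ℝ := ∑ m : Fin n → Bool, dR m ^ 2 with hT2_def
  set t1 : ℝ := ∑ m ∈ S, dR m with ht1_def
  set t2 : ℝ := ∑ m ∈ S, dR m ^ 2 with ht2_def
  set X : ℝ := ∑ m ∈ Finset.univ \ S, (nn - dR m) with hX_def
  set Q : ℝ := ∑ m ∈ Finset.univ \ S, (nn - dR m) ^ 2 with hQ_def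
  have hcard_sdiff : ((Finset.univ \ S).card : ℝ) = N - s := by
    have h1 : (Finset.univ \ S).card = 2 ^ n - S.card := by
      rw [Finset.card_sdiff_of_subset hsub, card_univ_cube]
    rw [h1, Nat.cast_sub hcardle, hN_def, hs_def]
  have hnn18 : (18 : ℝ) ≤ nn := by rw [hnn_def]; exact_mod_cast hn
  have hs0 : (0 : ℝ) ≤ s := by rw [hs_def]; positivity
  have hs1 : (1 : ℝ) ≤ s := by rw [hs_def]; exact_mod_cast hSpos
  have hsN : s ≤ N := by rw [hs_def, hN_def]; exact_mod_cast hcardle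
  have hN0 : (0 : ℝ) < N := by rw [hN_def]; positivity
  -- basic sum facts
  have hT1 : T1 = nn * s := by
    rw [hT1_def, hs_def, hnn_def, hdR_def, ← Nat.cast_sum]
    exact_mod_cast congrArg (Nat.cast : ℕ → ℝ) (sum_deg S)
  have ht1le : t1 ≤ 2 * s := by
    rw [ht1_def, hs_def]
    calc ∑ m ∈ S, dR m ≤ ∑ _m ∈ S, (2 : ℝ) := by
          refine Finset.sum_le_sum fun m hm => ?_
          have h := deg_le_two S hf1 hm
          simp only [hdR_def]
          exact_mod_cast h
      _ = 2 * S.card := by rw [Finset.sum_const]; push_cast; ring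
  have ht10 : 0 ≤ t1 := by
    rw [ht1_def]
    exact Finset.sum_nonneg fun m _ => by simp only [hdR_def]; positivity
  have hT2le : 2 * T2 ≤ s * nn ^ 2 + 2 * T1 := by
    rw [hT1]
    have h := sum_deg_sq_le S hf2
    have h2 : ((2 * ∑ m : Fin n → Bool, (deg S m) ^ 2 : ℕ) : ℝ)
        ≤ ((S.card * n ^ 2 + 2 * (n * S.card) : ℕ) : ℝ) := Nat.cast_le.mpr h
    push_cast at h2
    rw [hT2_def, hs_def, hnn_def, hdR_def]
    push_cast
    linarith [h2]
  have ht20 : 0 ≤ t2 := by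
    rw [ht2_def]
    exact Finset.sum_nonneg fun m _ => by positivity
  have ht2T2 : t2 ≤ T2 := by
    rw [ht2_def, hT2_def]
    exact Finset.sum_le_sum_of_subset_of_nonneg hsub fun m _ _ => by positivity
  have hdle : ∀ m, dR m ≤ nn := fun m => by
    simp only [hdR_def, hnn_def]
    exact_mod_cast deg_le S m
  -- X and Q expansions
  have hXeq : X = nn * (N - s) - (T1 - t1) := by
    rw [hX_def, Finset.sum_sub_distrib, Finset.sum_const, nsmul_eq_mul, hcard_sdiff,
      Finset.sum_sdiff_eq_sub hsub, ← hT1_def, ← ht1_def]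
    ring
  have hQeq : Q = nn ^ 2 * (N - s) - 2 * nn * (T1 - t1) + (T2 - t2) := by
    have expand : ∀ m, (nn - dR m) ^ 2 = nn ^ 2 - 2 * nn * dR m + dR m ^ 2 := fun m => by ring
    rw [hQ_def]
    simp_rw [expand]
    rw [Finset.sum_add_distrib, Finset.sum_sub_distrib, Finset.sum_const, nsmul_eq_mul,
      hcard_sdiff, ← Finset.mul_sum, Finset.sum_sdiff_eq_sub hsub,
      Finset.sum_sdiff_eq_sub hsub, ← hT1_def, ← ht1_def, ← hT2_def, ← ht2_def]
    ring
  have hXQ : X ≤ Q := by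
    rw [hX_def, hQ_def]
    refine Finset.sum_le_sum fun m _ => ?_
    have h1 : nn - dR m = ((n - deg S m : ℕ) : ℝ) := by
      rw [Nat.cast_sub (deg_le S m)]
    rw [h1]
    exact nat_le_sq _
  have hX0 : 0 ≤ X := by
    rw [hX_def]
    exact Finset.sum_nonneg fun m _ => by have := hdle m; linarith
  have hCS : X ^ 2 ≤ (N - s) * Q := by
    have h := sq_sum_le_card_mul_sum_sq (s := Finset.univ \ S) (f := fun m => nn - dR m)
    rw [show ((Finset.univ \ S).card : ℝ) = N - s from hcard_sdiff] at h
    exact h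
  -- MAIN inequality
  have h2nn : (2 : ℝ) ≤ nn := by linarith
  have hMAIN := algMAIN nn N s t1 t2 T1 T2 X Q hT1 hT2le ht1le ht10 ht20 h2nn hs0 hXeq hQeq
  have hhalf : 2 * s ≤ N := algHalf nn N s X Q hMAIN hXQ hnn18 hs0 hN0
  -- key inequality
  have hXlow : nn * (N - 2 * s) ≤ X := by
    rw [hXeq, hT1]; nlinarith [ht10]
  have hXup : X ≤ nn * (N - s) := by
    rw [hXeq, hT1]
    nlinarith [ht1le, mul_nonneg (show (0:ℝ) ≤ nn - 2 by linarith) hs0]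
  have hX0' : 0 ≤ nn * (N - 2 * s) :=
    mul_nonneg (by linarith) (by linarith)
  have hsq : (nn * (N - 2 * s)) ^ 2 ≤ X ^ 2 := by
    have := pow_le_pow_left₀ hX0' hXlow 2
    exact this
  have hNs0 : 0 ≤ N - s := by linarith
  have hkey := algKey nn N s X Q hMAIN hsq hCS hXup hNs0
  have hfinal : 3 * nn * s ≤ (nn + 20) * N := algFinal nn N s hnn18 hs1 hsN hkey
  -- back to ℕ
  have hcast : ((3 * n * S.card : ℕ) : ℝ) ≤ ((2 ^ n * (n + 20) : ℕ) : ℝ) := by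
    push_cast
    rw [hnn_def, hs_def, hN_def] at hfinal
    push_cast at hfinal
    nlinarith [hfinal]
  exact_mod_cast hcast

end LF

namespace LF

open Filter Topology

lemma exc2_nat_upper {n : ℕ} (hn : 18 ≤ n) :
    3 * n * exc2 n F1 F2 ≤ 2 ^ n * (n + 20) := by
  have h3n : 0 < 3 * n := by omega
  have hB : exc2 n F1 F2 ≤ 2 ^ n * (n + 20) / (3 * n) := by
    apply exc2_le
    intro S h1 h2
    rw [Nat.le_div_iff_mul_le h3n]
    calc S.card * (3 * n) = 3 * n * S.card := by ring
      _ ≤ 2 ^ n * (n + 20) := main_upper hn S h1 h2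
  calc 3 * n * exc2 n F1 F2 ≤ 3 * n * (2 ^ n * (n + 20) / (3 * n)) :=
        Nat.mul_le_mul_left _ hB
    _ = 2 ^ n * (n + 20) / (3 * n) * (3 * n) := by ring
    _ ≤ 2 ^ n * (n + 20) := Nat.div_mul_le_self _ _

lemma ratio_lower (n : ℕ) : (1 : ℝ) / 3 ≤ (exc2 n F1 F2 : ℝ) / 2 ^ n := by
  have h : ((2 : ℝ)) ^ n ≤ 3 * (exc2 n F1 F2 : ℝ) := by
    exact_mod_cast (exc2_lower (n := n))
  rw [le_div_iff₀ (by positivity : (0:ℝ) < 2 ^ n)]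
  linarith

lemma ratio_upper {n : ℕ} (hn : 18 ≤ n) :
    (exc2 n F1 F2 : ℝ) / 2 ^ n ≤ ((n : ℝ) + 20) / (3 * n) := by
  have key : 3 * (n : ℝ) * (exc2 n F1 F2 : ℝ) ≤ 2 ^ n * ((n : ℝ) + 20) := by
    exact_mod_cast exc2_nat_upper hn
  have hn0 : (0 : ℝ) < (n : ℝ) := by
    have : (0 : ℕ) < n := by omega
    exact_mod_cast this
  rw [div_le_div_iff₀ (by positivity) (by positivity)]
  nlinarith [key]

lemma upper_tendsto :
    Tendsto (fun n : ℕ => ((n : ℝ) + 20) / (3 * n)) atTop (𝓝 (1 / 3)) := by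
  have h1 : Tendsto (fun n : ℕ => 1 / 3 + (20 / 3) * (1 / (n : ℝ))) atTop (𝓝 (1 / 3)) := by
    have h0 : Tendsto (fun n : ℕ => (20 / 3 : ℝ) * (1 / (n : ℝ))) atTop (𝓝 0) := by
      simpa using (tendsto_one_div_atTop_nhds_zero_nat.const_mul (20 / 3 : ℝ))
    have := h0.const_add (1 / 3 : ℝ)
    simpa using this
  refine h1.congr' ?_
  filter_upwards [eventually_ge_atTop 1] with n hn
  have hn0 : (0 : ℝ) < (n : ℝ) := by exact_mod_cast hn
  field_simp

lemma part1 :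
    Tendsto (fun n : ℕ => (exc2 n F1 F2 : ℝ) / 2 ^ n) atTop (𝓝 (1 / 3)) := by
  refine tendsto_of_tendsto_of_tendsto_of_le_of_le' tendsto_const_nhds upper_tendsto ?_ ?_
  · exact Filter.Eventually.of_forall ratio_lower
  · filter_upwards [eventually_ge_atTop 18] with n hn
    exact ratio_upper hn

lemma part2 (L₁ L₂ : ℝ)
    (h1 : Tendsto (fun n : ℕ => (exc n F1 : ℝ) / 2 ^ n) atTop (𝓝 L₁))
    (h2 : Tendsto (fun n : ℕ => (exc n F2 : ℝ) / 2 ^ n) atTop (𝓝 L₂)) :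
    (1 : ℝ) / 3 < min L₁ L₂ := by
  have hb1 : (1 : ℝ) / 2 ≤ L₁ := by
    refine ge_of_tendsto h1 ?_
    refine Filter.Eventually.of_forall fun n => ?_
    have h : ((2 : ℝ)) ^ n ≤ 2 * (exc n F1 : ℝ) := by exact_mod_cast exc_F1_lower (n := n)
    rw [le_div_iff₀ (by positivity : (0:ℝ) < 2 ^ n)]
    linarith
  have hb2 : (1 : ℝ) / 2 ≤ L₂ := by
    refine ge_of_tendsto h2 ?_
    refine Filter.Eventually.of_forall fun n => ?_
    have h : ((2 : ℝ)) ^ n ≤ 2 * (exc n F2 : ℝ) := by exact_mod_cast exc_F2_lower (n := n)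
    rw [le_div_iff₀ (by positivity : (0:ℝ) < 2 ^ n)]
    linarith
  exact lt_min (by linarith) (by linarith)

end LF


/-- λ({F₁, F₂}) = 1/3; in particular it is strictly smaller than
min{λ(F₁), λ(F₂)} = 1/2. -/
theorem lambda_F1F2 :
    Filter.Tendsto (fun n : ℕ => (exc2 n F1 F2 : ℝ) / 2 ^ n) Filter.atTop (𝓝 (1 / 3)) ∧
    (∀ L₁ L₂ : ℝ,
      Filter.Tendsto (fun n : ℕ => (exc n F1 : ℝ) / 2 ^ n) Filter.atTop (𝓝 L₁) →
      Filter.Tendsto (fun n : ℕ => (exc n F2 : ℝ) / 2 ^ n) Filter.atTop (𝓝 L₂) →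
      (1 : ℝ) / 3 < min L₁ L₂) := by
  exact ⟨LF.part1, LF.part2⟩
end

section
/- For every integer d ≥ 3, λ(F_1^d) = 1/2, where F_1^d = {x ∈ V_d : |x| = 0 or |x| = 1}. -/
open Finset Filter Topology

/-- F₁^d = {x ∈ V_d : |x| = 0 or |x| = 1}. -/
def F1d (d : ℕ) : Set (Fin d → Bool) :=
  {x | cubeWeight x = 0 ∨ cubeWeight x = 1}

/-- F₂^d = {x ∈ V_d : |x| = 0, or |x| = 2 with supp(x) = {i,j} and i ≢ j (mod 2)}. -/
def F2d (d : ℕ) : Set (Fin d → Bool) :=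
  {x | cubeWeight x = 0 ∨
    (cubeWeight x = 2 ∧ ∃ i j : Fin d, (i : ℕ) % 2 ≠ (j : ℕ) % 2 ∧ cubeSupp x = {i, j})}

/-- F_d^d = {x ∈ V_d : |x| = 0 or |x| = d}, a pair of antipodal vertices. -/
def Fdd (d : ℕ) : Set (Fin d → Bool) :=
  {x | cubeWeight x = 0 ∨ cubeWeight x = d}


namespace F1dAux
variable {n d : ℕ}

def flip (v : Fin n → Bool) (j0 : Fin n) : Fin n → Bool :=
  fun j => xor (v j) (decide (j = j0))

lemma flip_flip (v : Fin n → Bool) (j0 : Fin n) : flip (flip v j0) j0 = v := by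
  funext j; simp [flip, Bool.xor_assoc]

lemma hamming_flip (v : Fin n → Bool) (j0 : Fin n) : hammingDist (flip v j0) v = 1 := by
  unfold hammingDist
  rw [Finset.card_eq_one]
  refine ⟨j0, ?_⟩
  ext j
  by_cases h : j = j0 <;> simp only [Finset.mem_filter, Finset.mem_univ, true_and, Finset.mem_singleton] <;> simp [flip, h]

lemma weight_parity (x y : Fin n → Bool) :
    cubeWeight x + cubeWeight y =
      2 * (Finset.univ.filter fun i => x i = true ∧ y i = true).card + hammingDist x y := by
  unfold cubeWeight hammingDist
  rw [Finset.card_filter, Finset.card_filter, Finset.card_filter, Finset.card_filter,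
    ← Finset.sum_add_distrib, Finset.mul_sum, ← Finset.sum_add_distrib]
  apply Finset.sum_congr rfl
  intro i _
  cases hx : x i <;> cases hy : y i <;> simp [hx, hy]

lemma parity_ne (x y : Fin n → Bool) (h : hammingDist x y = 1) :
    cubeWeight x % 2 ≠ cubeWeight y % 2 := by
  have := weight_parity x y
  omega

lemma card_even (hn : 1 ≤ n) :
    (Finset.univ.filter fun v : Fin n → Bool => cubeWeight v % 2 = 0).card = 2 ^ (n - 1) := by
  set E := Finset.univ.filter fun v : Fin n → Bool => cubeWeight v % 2 = 0 with hE
  set O := Finset.univ.filter fun v : Fin n → Bool => ¬ cubeWeight v % 2 = 0 with hO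
  have htot : E.card + O.card = 2 ^ n := by
    rw [hE, hO, Finset.card_filter_add_card_filter_not]
    simp [Fintype.card_fun]
  have j0 : Fin n := ⟨0, hn⟩
  have hEO : E.card = O.card := by
    apply Finset.card_bij' (fun v _ => flip v j0) (fun v _ => flip v j0)
    · intro v hv
      simp only [hE, hO, Finset.mem_filter, Finset.mem_univ, true_and] at hv ⊢
      have := parity_ne (flip v j0) v (hamming_flip v j0)
      omega
    · intro v hv
      simp only [hE, hO, Finset.mem_filter, Finset.mem_univ, true_and] at hv ⊢
      have := parity_ne (flip v j0) v (hamming_flip v j0)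
      omega
    · intro v _; exact flip_flip v j0
    · intro v _; exact flip_flip v j0
  have h2 : 2 * E.card = 2 ^ n := by omega
  have : 2 ^ n = 2 * 2 ^ (n - 1) := by
    rw [← pow_succ']
    congr 1
    omega
  omega

def emb (a : Fin d → Fin n) (v : Fin n → Bool) (x : Fin d → Bool) : Fin n → Bool :=
  fun j => xor (v j) (decide (∃ k, a k = j ∧ x k = true))

lemma emb_dist (a : Fin d → Fin n) (ha : Function.Injective a) (v : Fin n → Bool)
    (x y : Fin d → Bool) : hammingDist (emb a v x) (emb a v y) = hammingDist x y := by
  unfold hammingDist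
  have : (Finset.univ.filter fun j => emb a v x j ≠ emb a v y j)
      = (Finset.univ.filter fun k => x k ≠ y k).image a := by
    ext j
    simp only [Finset.mem_filter, Finset.mem_univ, true_and, Finset.mem_image, ne_eq]
    simp only [emb, Bool.xor_right_inj]
    constructor
    · intro h
      by_cases hj : ∃ k, a k = j
      · obtain ⟨k0, rfl⟩ := hj
        refine ⟨k0, ?_, rfl⟩
        intro hxy
        apply h
        apply decide_eq_decide.2
        constructor
        · rintro ⟨k, hk, hxk⟩
          exact ⟨k, hk, by rwa [ha hk, ← hxy, ← ha hk]⟩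
        · rintro ⟨k, hk, hyk⟩
          exact ⟨k, hk, by rwa [ha hk, hxy, ← ha hk]⟩
      · exfalso; apply h
        apply decide_eq_decide.2
        constructor
        · rintro ⟨k, hk, _⟩; exact absurd ⟨k, hk⟩ hj
        · rintro ⟨k, hk, _⟩; exact absurd ⟨k, hk⟩ hj
    · rintro ⟨k0, hk0, rfl⟩
      intro h
      rw [decide_eq_decide] at h
      cases hx : x k0
      · have := h.2 ⟨k0, rfl, by
          cases hy : y k0
          · exact absurd rfl (by rw [hx, hy] at hk0; exact hk0)
          · rfl⟩
        obtain ⟨k, hk, hxk⟩ := this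
        rw [ha hk] at hxk
        rw [hx] at hxk; exact Bool.false_ne_true hxk
      · cases hy : y k0
        · have := h.1 ⟨k0, rfl, hx⟩
          obtain ⟨k, hk, hyk⟩ := this
          rw [ha hk] at hyk
          rw [hy] at hyk; exact Bool.false_ne_true hyk
        · rw [hx, hy] at hk0; exact hk0 rfl
  rw [this, Finset.card_image_of_injective _ ha]

def e (m : Fin d) : Fin d → Bool := fun k => decide (k = m)

lemma weight_e (m : Fin d) : cubeWeight (e m) = 1 := by
  unfold cubeWeight
  rw [Finset.card_eq_one]
  exact ⟨m, by ext k; by_cases h : k = m <;> simp [e, h]⟩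

lemma weight_zero : cubeWeight (fun _ : Fin d => false) = 0 := by
  simp [cubeWeight]

lemma mem_F1d_zero : (fun _ : Fin d => false) ∈ F1d d := Or.inl weight_zero
lemma mem_F1d_e (m : Fin d) : e m ∈ F1d d := Or.inr (weight_e m)

lemma F1d_char {x : Fin d → Bool} (hx : x ∈ F1d d) :
    x = (fun _ => false) ∨ ∃ m, x = e m := by
  rcases hx with h | h
  · left
    funext k
    have : k ∉ Finset.univ.filter fun i => x i = true := by
      rw [Finset.card_eq_zero.1 h]; simp
    simpa using this
  · right
    rw [cubeWeight, Finset.card_eq_one] at h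
    obtain ⟨m, hm⟩ := h
    refine ⟨m, funext fun k => ?_⟩
    have : x k = true ↔ k = m := by
      rw [show (x k = true) ↔ k ∈ Finset.univ.filter fun i => x i = true by simp, hm]
      simp
    by_cases h : k = m
    · subst h; simp [e, this.2 rfl]
    · simp only [e, h, decide_false]
      cases hxk : x k
      · rfl
      · exact absurd (this.1 hxk) h

lemma emb_zero (a : Fin d → Fin n) (v : Fin n → Bool) :
    emb a v (fun _ => false) = v := by
  funext j; simp [emb]

lemma emb_e (a : Fin d → Fin n) (v : Fin n → Bool) (m : Fin d) :
    emb a v (e m) = flip v (a m) := by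
  funext j
  simp only [emb, flip]
  congr 1
  rw [decide_eq_decide]
  constructor
  · rintro ⟨k, hk, hek⟩
    simp only [e, decide_eq_true_eq] at hek
    rw [← hk, hek]
  · rintro rfl
    exact ⟨m, rfl, by simp [e]⟩

lemma isemb (a : Fin d → Fin n) (ha : Function.Injective a) (v : Fin n → Bool) :
    IsCubeEmbedding (emb a v) := by
  constructor
  · intro x y hxy
    have := emb_dist a ha v x y
    rw [hxy] at this
    have h0 : hammingDist x y = 0 := by
      rw [← this]; exact hammingDist_self _
    exact hammingDist_eq_zero.1 h0
  · intro x y h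
    rw [emb_dist a ha v, h]

lemma even_free (hd : 1 ≤ d) :
    IsFree (F1d d) ((Finset.univ.filter fun v : Fin n → Bool => cubeWeight v % 2 = 0 :
      Finset (Fin n → Bool)) : Set (Fin n → Bool)) := by
  intro i hi hsub
  have h0 : i (fun _ => false) ∈ _ := hsub ⟨_, mem_F1d_zero, rfl⟩
  have h1 : i (e ⟨0, hd⟩) ∈ _ := hsub ⟨_, mem_F1d_e ⟨0, hd⟩, rfl⟩
  simp only [Finset.coe_filter, Set.mem_setOf_eq, Finset.mem_univ, true_and] at h0 h1
  have hdist : hammingDist (fun _ : Fin d => false) (e ⟨0, hd⟩) = 1 := by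
    unfold hammingDist
    rw [Finset.card_eq_one]
    exact ⟨⟨0, hd⟩, by ext k; by_cases h : k = (⟨0, hd⟩ : Fin d) <;> simp [e, h]⟩
  have := parity_ne _ _ (hi.2 _ _ hdist)
  omega

lemma deg_le (S : Finset (Fin n → Bool)) (hS : IsFree (F1d d) (S : Set (Fin n → Bool)))
    (v : Fin n → Bool) (hv : v ∈ S) :
    (Finset.univ.filter fun j => flip v j ∈ S).card ≤ d - 1 := by
  by_contra h
  push_neg at h
  have hd1 : d ≤ (Finset.univ.filter fun j => flip v j ∈ S).card := by
    rcases Nat.eq_zero_or_pos d with rfl | hd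
    · exact Nat.zero_le _
    · omega
  obtain ⟨t, hts, htc⟩ := Finset.exists_subset_card_eq hd1
  let eo := t.orderIsoOfFin htc
  set a : Fin d → Fin n := fun k => (eo k : Fin n) with ha
  have hainj : Function.Injective a := by
    intro k1 k2 hk
    exact eo.injective (Subtype.ext hk)
  refine hS (emb a v) (isemb a hainj v) ?_
  rintro _ ⟨x, hx, rfl⟩
  rcases F1d_char hx with rfl | ⟨m, rfl⟩
  · rw [emb_zero]; exact hv
  · rw [emb_e]
    have : a m ∈ t := (eo m).2
    have := hts this
    simp only [Finset.mem_filter] at this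
    exact this.2

lemma card_cube : Fintype.card (Fin n → Bool) = 2 ^ n := by
  simp

lemma count (S : Finset (Fin n → Bool)) (hS : IsFree (F1d d) (S : Set (Fin n → Bool))) :
    S.card * (n - (d - 1)) ≤ (2 ^ n - S.card) * n := by
  classical
  set A := (S ×ˢ (Finset.univ : Finset (Fin n))).filter
    (fun p : (Fin n → Bool) × Fin n => flip p.1 p.2 ∉ S) with hA
  have hAcard : A.card = ∑ v ∈ S, (Finset.univ.filter fun j => flip v j ∉ S).card := by
    rw [hA, Finset.card_filter, Finset.sum_product]
    exact Finset.sum_congr rfl fun v _ => (Finset.card_filter _ _).symm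
  have hlow : S.card * (n - (d - 1)) ≤ A.card := by
    rw [hAcard]
    calc S.card * (n - (d - 1)) = ∑ _v ∈ S, (n - (d - 1)) := by
          rw [Finset.sum_const, smul_eq_mul]
      _ ≤ _ := by
          apply Finset.sum_le_sum
          intro v hv
          have h1 := deg_le S hS v hv
          have h2 : (Finset.univ.filter fun j => flip v j ∈ S).card
              + (Finset.univ.filter fun j => ¬ flip v j ∈ S).card = n := by
            rw [Finset.card_filter_add_card_filter_not]
            simp
          omega
  have hup : A.card ≤ (2 ^ n - S.card) * n := by
    have h1 : A.card ≤ (Sᶜ ×ˢ (Finset.univ : Finset (Fin n))).card := by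
      apply Finset.card_le_card_of_injOn (fun p => (flip p.1 p.2, p.2))
      · intro p hp
        simp only [hA, Finset.mem_filter, Finset.mem_product] at hp
        simp only [Finset.mem_coe, Finset.mem_product, Finset.mem_compl, Finset.mem_univ, and_true]
        exact (Finset.mem_filter.1 (show p ∈ A from hp)).2
      · intro p _ q _ hpq
        obtain ⟨h1, h2⟩ := Prod.mk.injEq .. ▸ hpq
        have h2' : p.2 = q.2 := h2
        have : p.1 = q.1 := by
          have := congrArg (fun w => flip w p.2) h1
          simpa [h2', flip_flip] using this
        exact Prod.ext this h2'
    have h2 : (Sᶜ ×ˢ (Finset.univ : Finset (Fin n))).card = (2 ^ n - S.card) * n := by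
      rw [Finset.card_product, Finset.card_compl, card_cube]
      simp
    omega
  omega

lemma bdd : BddAbove {k : ℕ | ∃ S : Finset (Fin n → Bool),
    IsFree (F1d d) (S : Set (Fin n → Bool)) ∧ S.card = k} := by
  refine ⟨2 ^ n, ?_⟩
  rintro k ⟨S, _, rfl⟩
  calc S.card ≤ Fintype.card (Fin n → Bool) := Finset.card_le_univ S
    _ = 2 ^ n := card_cube

lemma exc_ge (hn : 1 ≤ n) (hd : 1 ≤ d) : 2 ^ (n - 1) ≤ exc n (F1d d) :=
  le_csSup bdd ⟨_, even_free hd, card_even hn⟩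

lemma exc_exists : ∃ S : Finset (Fin n → Bool),
    IsFree (F1d d) (S : Set (Fin n → Bool)) ∧ S.card = exc n (F1d d) := by
  have hne : {k : ℕ | ∃ S : Finset (Fin n → Bool),
      IsFree (F1d d) (S : Set (Fin n → Bool)) ∧ S.card = k}.Nonempty := by
    refine ⟨0, ∅, ?_, by simp⟩
    intro i _ hsub
    have := hsub ⟨_, mem_F1d_zero, rfl⟩
    simp at this
  exact Nat.sSup_mem hne bdd

lemma upper_tendsto (d : ℕ) :
    Tendsto (fun n : ℕ => (n : ℝ) / (2 * n - d + 1)) atTop (𝓝 (1 / 2)) := by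
  have h0 : Tendsto (fun n : ℕ => ((1 : ℝ) - d) / n) atTop (𝓝 0) :=
    tendsto_const_div_atTop_nhds_zero_nat _
  have h2 : Tendsto (fun n : ℕ => 2 + ((1 : ℝ) - d) / n) atTop (𝓝 2) := by
    simpa using tendsto_const_nhds.add h0
  have h3 : Tendsto (fun n : ℕ => (1 : ℝ) / (2 + ((1 : ℝ) - d) / n)) atTop (𝓝 (1 / 2)) :=
    tendsto_const_nhds.div h2 (by norm_num)
  apply h3.congr'
  filter_upwards [eventually_ge_atTop (max 1 d)] with n hn
  have hn1 : (1 : ℕ) ≤ n := le_trans (le_max_left _ _) hn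
  have hnd : d ≤ n := le_trans (le_max_right _ _) hn
  have hn0 : (n : ℝ) ≠ 0 := by positivity
  have hdn : (d : ℝ) ≤ n := by exact_mod_cast hnd
  have h1n : (1 : ℝ) ≤ n := by exact_mod_cast hn1
  have hden : (2 * n - d + 1 : ℝ) ≠ 0 := by nlinarith
  have key : 2 + ((1 : ℝ) - d) / n = (2 * n - d + 1) / n := by
    field_simp
    ring
  rw [key, one_div_div]

end F1dAux

/-- For every d ≥ 3, λ(F₁^d) = 1/2. -/
theorem lambda_F1d (d : ℕ) (hd : 3 ≤ d) :
    Filter.Tendsto (fun n : ℕ => (exc n (F1d d) : ℝ) / 2 ^ n) Filter.atTop (𝓝 (1 / 2)) := by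
  have hd1 : 1 ≤ d := by omega
  apply tendsto_of_tendsto_of_tendsto_of_le_of_le'
    (g := fun _ : ℕ => (1 / 2 : ℝ)) (h := fun n : ℕ => (n : ℝ) / (2 * n - d + 1))
    tendsto_const_nhds (F1dAux.upper_tendsto d)
  · filter_upwards [eventually_ge_atTop 1] with n hn
    have hexc := F1dAux.exc_ge (n := n) (d := d) hn hd1
    have h2n : (2 : ℕ) ^ n = 2 * 2 ^ (n - 1) := by
      rw [← pow_succ']
      congr 1
      omega
    have h2 : (2 : ℕ) ^ n ≤ 2 * exc n (F1d d) := by omega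
    have h2r : (2 : ℝ) ^ n ≤ 2 * exc n (F1d d) := by exact_mod_cast h2
    rw [div_le_div_iff₀ (by norm_num) (by positivity)]
    linarith
  · filter_upwards [eventually_ge_atTop d] with n hn
    obtain ⟨S, hfree, hcard⟩ := F1dAux.exc_exists (n := n) (d := d)
    have hN := F1dAux.count S hfree
    rw [hcard] at hN
    have hle : exc n (F1d d) ≤ 2 ^ n := by
      rw [← hcard]
      calc S.card ≤ Fintype.card (Fin n → Bool) := Finset.card_le_univ S
        _ = 2 ^ n := F1dAux.card_cube
    set k := exc n (F1d d) with hk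
    have hcast : (k : ℝ) * ((n : ℝ) - d + 1) ≤ ((2 : ℝ) ^ n - k) * n := by
      have hd1n : d - 1 ≤ n := by omega
      have h1 : ((n - (d - 1) : ℕ) : ℝ) = (n : ℝ) - d + 1 := by
        rw [Nat.cast_sub hd1n, Nat.cast_sub hd1]
        push_cast
        ring
      have h2 : ((2 ^ n - k : ℕ) : ℝ) = (2 : ℝ) ^ n - k := by
        rw [Nat.cast_sub hle]
        push_cast
        ring
      calc (k : ℝ) * ((n : ℝ) - d + 1) = ((k * (n - (d - 1)) : ℕ) : ℝ) := by
            rw [Nat.cast_mul, h1]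
        _ ≤ (((2 ^ n - k) * n : ℕ) : ℝ) := by exact_mod_cast hN
        _ = ((2 : ℝ) ^ n - k) * n := by rw [Nat.cast_mul, h2]
    have hdn : (d : ℝ) ≤ n := by exact_mod_cast hn
    have h3d : (3 : ℝ) ≤ d := by exact_mod_cast hd
    have hpos : (0 : ℝ) < 2 * n - d + 1 := by linarith
    rw [div_le_div_iff₀ (by positivity) hpos]
    nlinarith
end
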